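/- arXiv:2204.06645 — 7 statements merged into one kernel-verified Lean document; each statement's English description precedes it below -/
import Mathlib

section
/- Let μ₀ ∈ 𝕎₂(ℝ^m) be absolutely continuous with respect to Lebesgue measure, and let θ, θ' ∈ ℝ^m have strictly positive entries θ₁,…,θ_m and θ'₁,…,θ'_m. Let μ_θ and μ_{θ'} be the dilations of μ₀ by θ and θ' respectively. Then W₂(μ_θ, μ_{θ'})² = Σ_{i=1}^m |θᵢ − θ'ᵢ|² ∫_{ℝ^m} |xᵢ|² dμ₀(x). -/
open MeasureTheory Filter Set
open scoped ENNReal NNReal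

noncomputable section

/-- The 2-Wasserstein distance between two measures on `ℝ^m`, defined as the infimum
over all couplings (probability measures on the product whose marginals are `μ` and `ν`)
of the square root of the quadratic transport cost. -/
noncomputable def W2 {m : ℕ} (μ ν : Measure (EuclideanSpace ℝ (Fin m))) : ℝ≥0∞ :=
  ⨅ (γ : Measure (EuclideanSpace ℝ (Fin m) × EuclideanSpace ℝ (Fin m)))
    (_ : IsProbabilityMeasure γ) (_ : γ.map Prod.fst = μ) (_ : γ.map Prod.snd = ν),
    (∫⁻ p, ENNReal.ofReal (‖p.1 - p.2‖ ^ 2) ∂γ) ^ (1 / 2 : ℝ)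

/-- A measure has finite second moment if `∫ |x|² dμ < ∞`. -/
def FiniteSecondMoment {m : ℕ} (μ : Measure (EuclideanSpace ℝ (Fin m))) : Prop :=
  ∫⁻ x, ENNReal.ofReal (‖x‖ ^ 2) ∂μ ≠ ⊤

/-- The dilation of a measure `μ` by `θ ∈ ℝ^m_+`: the pushforward of `μ` under the linear
map `x ↦ (θ₁x₁, …, θ_m x_m)`. -/
noncomputable def dilate {m : ℕ} (θ : Fin m → ℝ)
    (μ : Measure (EuclideanSpace ℝ (Fin m))) : Measure (EuclideanSpace ℝ (Fin m)) :=
  μ.map (fun x => WithLp.toLp 2 (fun i => θ i * x i))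

namespace WDaux

variable {m : ℕ}

lemma ofReal_sq (r : ℝ) : ENNReal.ofReal (r ^ 2) = (‖r‖₊ : ℝ≥0∞) ^ (2 : ℝ) := by
  rw [ENNReal.rpow_two, ← enorm_eq_nnnorm r, Real.enorm_eq_ofReal_abs, ← ENNReal.ofReal_pow (abs_nonneg r), sq_abs]

lemma enn_of_pos {r : ℝ} (hr : 0 ≤ r) : (‖r‖₊ : ℝ≥0∞) = ENNReal.ofReal r := by
  rw [← enorm_eq_nnnorm r, Real.enorm_eq_ofReal_abs, abs_of_nonneg hr]

lemma meas_coord (i : Fin m) : Measurable (fun x : EuclideanSpace ℝ (Fin m) => x i) := by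
  have : Measurable (fun x : Fin m → ℝ => x i) := measurable_pi_apply i
  exact this.comp (WithLp.measurable_ofLp 2 _)

lemma meas_dil (θ : Fin m → ℝ) :
    Measurable (fun x : EuclideanSpace ℝ (Fin m) =>
      (WithLp.toLp 2 (fun i => θ i * x i) : EuclideanSpace ℝ (Fin m))) := by
  exact (WithLp.measurable_toLp 2 _).comp (measurable_pi_lambda _ fun i =>
    (meas_coord i).const_mul (θ i))

lemma meas_coordsq (i : Fin m) :
    Measurable (fun x : EuclideanSpace ℝ (Fin m) => (‖x i‖₊ : ℝ≥0∞) ^ (2 : ℝ)) :=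
  ((meas_coord i).nnnorm.coe_nnreal_ennreal).pow_const _

lemma ofReal_norm_sq (v : EuclideanSpace ℝ (Fin m)) :
    ENNReal.ofReal (‖v‖ ^ 2) = ∑ i, (‖v i‖₊ : ℝ≥0∞) ^ (2 : ℝ) := by
  rw [EuclideanSpace.norm_eq, Real.sq_sqrt (by positivity),
    ENNReal.ofReal_sum_of_nonneg (fun i _ => by positivity)]
  refine Finset.sum_congr rfl fun i _ => ?_
  rw [← ofReal_sq]
  congr 1
  rw [Real.norm_eq_abs, sq_abs]

lemma lint_dilate (μ₀ : Measure (EuclideanSpace ℝ (Fin m))) (θ : Fin m → ℝ)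
    (hθ : ∀ i, 0 ≤ θ i) (i : Fin m) :
    ∫⁻ x, (‖x i‖₊ : ℝ≥0∞) ^ (2 : ℝ) ∂(dilate θ μ₀) =
      (ENNReal.ofReal (θ i)) ^ (2 : ℝ) * ∫⁻ x, (‖x i‖₊ : ℝ≥0∞) ^ (2 : ℝ) ∂μ₀ := by
  rw [dilate, lintegral_map (meas_coordsq i) (meas_dil θ)]
  have : ∀ x : EuclideanSpace ℝ (Fin m),
      (‖(WithLp.toLp 2 (fun j => θ j * x j) : EuclideanSpace ℝ (Fin m)) i‖₊ : ℝ≥0∞) ^ (2 : ℝ)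
        = (ENNReal.ofReal (θ i)) ^ (2 : ℝ) * (‖x i‖₊ : ℝ≥0∞) ^ (2 : ℝ) := by
    intro x
    show (‖θ i * x i‖₊ : ℝ≥0∞) ^ (2 : ℝ) = _
    rw [nnnorm_mul, ENNReal.coe_mul, ENNReal.mul_rpow_of_nonneg _ _ (by norm_num),
      enn_of_pos (hθ i)]
  simp_rw [this]
  rw [lintegral_const_mul _ (meas_coordsq i)]

lemma rev_triangle {α : Type*} [MeasurableSpace α] (γ : Measure α) (u v : α → ℝ)
    (hu : Measurable u) (hv : Measurable v) :
    (∫⁻ a, (‖u a‖₊ : ℝ≥0∞) ^ (2 : ℝ) ∂γ) ^ (1/2 : ℝ) ≤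
      (∫⁻ a, (‖u a - v a‖₊ : ℝ≥0∞) ^ (2 : ℝ) ∂γ) ^ (1/2 : ℝ) +
      (∫⁻ a, (‖v a‖₊ : ℝ≥0∞) ^ (2 : ℝ) ∂γ) ^ (1/2 : ℝ) := by
  have h1 : (∫⁻ a, (‖u a‖₊ : ℝ≥0∞) ^ (2 : ℝ) ∂γ) ≤
      ∫⁻ a, ((fun a => (‖u a - v a‖₊ : ℝ≥0∞)) + fun a => (‖v a‖₊ : ℝ≥0∞)) a ^ (2 : ℝ) ∂γ := by
    refine lintegral_mono fun a => ?_
    refine ENNReal.rpow_le_rpow ?_ (by norm_num)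
    have : ‖u a‖₊ ≤ ‖u a - v a‖₊ + ‖v a‖₊ := by
      calc ‖u a‖₊ = ‖(u a - v a) + v a‖₊ := by ring_nf
        _ ≤ _ := nnnorm_add_le _ _
    show (‖u a‖₊ : ℝ≥0∞) ≤ (‖u a - v a‖₊ : ℝ≥0∞) + (‖v a‖₊ : ℝ≥0∞)
    exact_mod_cast this
  calc (∫⁻ a, (‖u a‖₊ : ℝ≥0∞) ^ (2 : ℝ) ∂γ) ^ (1/2 : ℝ)
      ≤ (∫⁻ a, ((fun a => (‖u a - v a‖₊ : ℝ≥0∞)) + fun a => (‖v a‖₊ : ℝ≥0∞)) a ^ (2 : ℝ) ∂γ)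
          ^ (1/2 : ℝ) := ENNReal.rpow_le_rpow h1 (by norm_num)
    _ ≤ _ := ENNReal.lintegral_Lp_add_le
        ((hu.sub hv).nnnorm.coe_nnreal_ennreal).aemeasurable
        (hv.nnnorm.coe_nnreal_ennreal).aemeasurable (by norm_num)

end WDaux


open WDaux

/-- For absolutely continuous `μ₀ ∈ 𝕎₂(ℝ^m)` and `θ, θ'` with strictly positive
entries, `W₂(μ_θ, μ_{θ'})² = Σᵢ |θᵢ − θ'ᵢ|² ∫ |xᵢ|² dμ₀(x)`. -/
theorem wasserstein_dilation_ac {m : ℕ}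
    (μ₀ : Measure (EuclideanSpace ℝ (Fin m))) [IsProbabilityMeasure μ₀]
    (hac : μ₀ ≪ volume) (hmom : FiniteSecondMoment μ₀)
    (θ θ' : Fin m → ℝ) (hθ : ∀ i, 0 < θ i) (hθ' : ∀ i, 0 < θ' i) :
    (W2 (dilate θ μ₀) (dilate θ' μ₀)) ^ 2 =
      ENNReal.ofReal (∑ i, |θ i - θ' i| ^ 2 * ∫ x, (x i) ^ 2 ∂μ₀) := by
  classical
  set E := EuclideanSpace ℝ (Fin m)
  set L : Fin m → ℝ≥0∞ := fun i => ∫⁻ x, (‖x i‖₊ : ℝ≥0∞) ^ (2 : ℝ) ∂μ₀ with hLdef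
  have hLfin : ∀ i, L i ≠ ⊤ := by
    intro i
    refine ne_top_of_le_ne_top hmom (lintegral_mono fun x => ?_)
    rw [ofReal_norm_sq]
    exact Finset.single_le_sum (f := fun j => (‖x j‖₊ : ℝ≥0∞) ^ (2 : ℝ))
      (fun _ _ => zero_le) (Finset.mem_univ i)
  set S : ℝ≥0∞ := ∑ i, (ENNReal.ofReal |θ i - θ' i|) ^ (2 : ℝ) * L i with hSdef
  -- cost decomposition for arbitrary coupling
  have cost_eq : ∀ γ : Measure (E × E),
      ∫⁻ p, ENNReal.ofReal (‖p.1 - p.2‖ ^ 2) ∂γ =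
        ∑ i, ∫⁻ p, (‖p.1 i - p.2 i‖₊ : ℝ≥0∞) ^ (2 : ℝ) ∂γ := by
    intro γ
    have h1 : ∀ p : E × E, ENNReal.ofReal (‖p.1 - p.2‖ ^ 2) =
        ∑ i, (‖p.1 i - p.2 i‖₊ : ℝ≥0∞) ^ (2 : ℝ) := by
      intro p
      rw [ofReal_norm_sq]
      exact Finset.sum_congr rfl fun i _ => rfl
    simp_rw [h1]
    exact lintegral_finset_sum _ fun i _ =>
      (((meas_coord i).comp measurable_fst).sub
        ((meas_coord i).comp measurable_snd)).nnnorm.coe_nnreal_ennreal.pow_const _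
  -- upper bound
  have hub : W2 (dilate θ μ₀) (dilate θ' μ₀) ≤ S ^ (1/2 : ℝ) := by
    set F : E → E × E := fun x =>
      ((WithLp.toLp 2 (fun i => θ i * x i) : E), (WithLp.toLp 2 (fun i => θ' i * x i) : E)) with hF
    have hFm : Measurable F := (meas_dil θ).prodMk (meas_dil θ')
    set γ₀ : Measure (E × E) := μ₀.map F with hγ₀
    have hprob : IsProbabilityMeasure γ₀ := Measure.isProbabilityMeasure_map hFm.aemeasurable
    have hfst : γ₀.map Prod.fst = dilate θ μ₀ := by
      rw [hγ₀, Measure.map_map measurable_fst hFm]; rfl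
    have hsnd : γ₀.map Prod.snd = dilate θ' μ₀ := by
      rw [hγ₀, Measure.map_map measurable_snd hFm]; rfl
    have hcost : ∫⁻ p, ENNReal.ofReal (‖p.1 - p.2‖ ^ 2) ∂γ₀ = S := by
      have hcm : Measurable (fun p : E × E => ENNReal.ofReal (‖p.1 - p.2‖ ^ 2)) :=
        (((measurable_fst.sub measurable_snd).norm).pow_const 2).ennreal_ofReal
      rw [hγ₀, lintegral_map hcm hFm]
      have h2 : ∀ x : E, ENNReal.ofReal (‖(F x).1 - (F x).2‖ ^ 2) =
          ∑ i, (ENNReal.ofReal |θ i - θ' i|) ^ (2 : ℝ) * (‖x i‖₊ : ℝ≥0∞) ^ (2 : ℝ) := by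
        intro x
        rw [ofReal_norm_sq]
        refine Finset.sum_congr rfl fun i _ => ?_
        have : ((F x).1 - (F x).2) i = (θ i - θ' i) * x i := by
          show θ i * x i - θ' i * x i = _
          ring
        rw [this, nnnorm_mul, ENNReal.coe_mul,
          ENNReal.mul_rpow_of_nonneg _ _ (by norm_num), ← enorm_eq_nnnorm (θ i - θ' i), Real.enorm_eq_ofReal_abs]
      simp_rw [h2]
      rw [lintegral_finset_sum _ fun i _ => (meas_coordsq i).const_mul _]
      exact Finset.sum_congr rfl fun i _ => lintegral_const_mul _ (meas_coordsq i)
    calc W2 (dilate θ μ₀) (dilate θ' μ₀)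
        ≤ (∫⁻ p, ENNReal.ofReal (‖p.1 - p.2‖ ^ 2) ∂γ₀) ^ (1/2 : ℝ) := by
          refine iInf_le_of_le γ₀ (iInf_le_of_le hprob (iInf_le_of_le hfst
            (iInf_le_of_le hsnd ?_)))
          exact le_rfl
      _ = S ^ (1/2 : ℝ) := by rw [hcost]
  -- lower bound
  have hlb : S ^ (1/2 : ℝ) ≤ W2 (dilate θ μ₀) (dilate θ' μ₀) := by
    refine le_iInf fun γ => le_iInf fun hγ => le_iInf fun h1 => le_iInf fun h2 => ?_
    refine ENNReal.rpow_le_rpow ?_ (by norm_num)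
    rw [cost_eq γ]
    refine Finset.sum_le_sum fun i _ => ?_
    set c : ℝ≥0∞ := ∫⁻ p : E × E, (‖p.1 i - p.2 i‖₊ : ℝ≥0∞) ^ (2 : ℝ) ∂γ with hc
    have hA : ∫⁻ p : E × E, (‖p.1 i‖₊ : ℝ≥0∞) ^ (2 : ℝ) ∂γ =
        (ENNReal.ofReal (θ i)) ^ (2 : ℝ) * L i := by
      rw [← lintegral_map (meas_coordsq i) measurable_fst, h1, lint_dilate μ₀ θ
        (fun j => (hθ j).le) i]
    have hB : ∫⁻ p : E × E, (‖p.2 i‖₊ : ℝ≥0∞) ^ (2 : ℝ) ∂γ =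
        (ENNReal.ofReal (θ' i)) ^ (2 : ℝ) * L i := by
      rw [← lintegral_map (meas_coordsq i) measurable_snd, h2, lint_dilate μ₀ θ'
        (fun j => (hθ' j).le) i]
    set t : ℝ≥0∞ := (L i) ^ (1/2 : ℝ) with ht
    have htfin : t ≠ ⊤ := by
      rw [ht]
      exact (ENNReal.rpow_lt_top_of_nonneg (by norm_num) (hLfin i)).ne
    have hsplit : ∀ r : ℝ≥0∞, (r ^ (2 : ℝ) * L i) ^ (1/2 : ℝ) = r * t := by
      intro r
      rw [ENNReal.mul_rpow_of_nonneg _ _ (by norm_num), ← ENNReal.rpow_mul]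
      norm_num
      rfl
    have hu : Measurable (fun p : E × E => p.1 i) := (meas_coord i).comp measurable_fst
    have hv : Measurable (fun p : E × E => p.2 i) := (meas_coord i).comp measurable_snd
    have tri1 : ENNReal.ofReal (θ i) * t ≤ c ^ (1/2 : ℝ) + ENNReal.ofReal (θ' i) * t := by
      have := rev_triangle γ (fun p => p.1 i) (fun p => p.2 i) hu hv
      rwa [hA, hB, hsplit, hsplit, ← hc] at this
    have tri2 : ENNReal.ofReal (θ' i) * t ≤ c ^ (1/2 : ℝ) + ENNReal.ofReal (θ i) * t := by
      have := rev_triangle γ (fun p => p.2 i) (fun p => p.1 i) hv hu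
      have hrev : (∫⁻ p : E × E, (‖p.2 i - p.1 i‖₊ : ℝ≥0∞) ^ (2 : ℝ) ∂γ) = c := by
        rw [hc]
        exact lintegral_congr fun p => by
          rw [← neg_sub (p.1 i) (p.2 i), nnnorm_neg]
      rwa [hA, hB, hsplit, hsplit, hrev] at this
    have key : ENNReal.ofReal |θ i - θ' i| * t ≤ c ^ (1/2 : ℝ) := by
      rcases le_total (θ' i) (θ i) with h | h
      · rw [abs_of_nonneg (sub_nonneg.2 h), ENNReal.ofReal_sub _ (hθ' i).le,
          ENNReal.sub_mul (fun _ _ => htfin)]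
        exact tsub_le_iff_right.2 tri1
      · rw [abs_of_nonpos (sub_nonpos.2 h), neg_sub, ENNReal.ofReal_sub _ (hθ i).le,
          ENNReal.sub_mul (fun _ _ => htfin)]
        exact tsub_le_iff_right.2 tri2
    have h3 := ENNReal.rpow_le_rpow key (z := 2) (by norm_num)
    rw [ENNReal.mul_rpow_of_nonneg _ _ (by norm_num), ht, ← ENNReal.rpow_mul,
      ← ENNReal.rpow_mul] at h3
    norm_num at h3
    rw [ENNReal.rpow_two]
    exact h3
  rw [le_antisymm hub hlb]
  have hsq : (S ^ (1/2 : ℝ)) ^ 2 = S := by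
    rw [← ENNReal.rpow_two, ← ENNReal.rpow_mul]
    norm_num
  rw [hsq]
  have hM : ∀ i, ∫ x, (x i) ^ 2 ∂μ₀ = (L i).toReal := by
    intro i
    rw [integral_eq_lintegral_of_nonneg_ae (ae_of_all _ fun x => sq_nonneg _)
      (((meas_coord i).pow_const 2).aestronglyMeasurable)]
    congr 1
    exact lintegral_congr fun x => ofReal_sq _
  rw [hSdef, ENNReal.ofReal_sum_of_nonneg (fun i _ =>
    mul_nonneg (by positivity) (integral_nonneg fun x => sq_nonneg _))]
  refine Finset.sum_congr rfl fun i _ => ?_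
  rw [hM i, ENNReal.ofReal_mul (by positivity), ENNReal.ofReal_toReal (hLfin i),
    ENNReal.rpow_two, ← ENNReal.ofReal_pow (abs_nonneg _)]
end
end

section
/- Let ν₀ ∈ 𝕎₂(ℝ^m) be an arbitrary (not necessarily absolutely continuous) probability measure with finite second moment, and let θ, θ' ∈ ℝ^m have strictly positive entries. Let ν_θ and ν_{θ'} be the dilations of ν₀ by θ and θ' respectively. Then W₂(ν_θ, ν_{θ'})² = Σ_{i=1}^m |θᵢ − θ'ᵢ|² ∫_{ℝ^m} |xᵢ|² dν₀(x). -/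
open MeasureTheory Filter Set
open scoped ENNReal NNReal

noncomputable section

lemma measurable_dil {m : ℕ} (θ : Fin m → ℝ) :
    Measurable (fun (x : EuclideanSpace ℝ (Fin m)) => WithLp.toLp 2 (fun i => θ i * x i) :
      EuclideanSpace ℝ (Fin m) → EuclideanSpace ℝ (Fin m)) :=
  Continuous.measurable (by fun_prop)

lemma normSq_eq {m : ℕ} (x : EuclideanSpace ℝ (Fin m)) : ‖x‖ ^ 2 = ∑ i, (x i) ^ 2 := by
  rw [EuclideanSpace.norm_eq, Real.sq_sqrt (by positivity)]
  simp [sq_abs]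

lemma integrable_normSq {m : ℕ} {μ : Measure (EuclideanSpace ℝ (Fin m))}
    (h : FiniteSecondMoment μ) : Integrable (fun x => ‖x‖ ^ 2) μ := by
  refine ⟨(continuous_norm.pow 2).aestronglyMeasurable, ?_⟩
  rw [hasFiniteIntegral_iff_norm]
  simpa [Real.norm_eq_abs, abs_pow, sq_abs] using h.lt_top

lemma measurable_coordSq {m : ℕ} (i : Fin m) :
    Measurable (fun x : EuclideanSpace ℝ (Fin m) => (x i) ^ 2) :=
  Continuous.measurable (by fun_prop)

lemma coordSq_le_normSq {m : ℕ} (i : Fin m) (x : EuclideanSpace ℝ (Fin m)) :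
    (x i) ^ 2 ≤ ‖x‖ ^ 2 := by
  rw [normSq_eq]
  exact Finset.single_le_sum (f := fun j => (x j) ^ 2) (fun j _ => sq_nonneg _)
    (Finset.mem_univ i)

lemma integrable_coordSq {m : ℕ} {μ : Measure (EuclideanSpace ℝ (Fin m))}
    (h : FiniteSecondMoment μ) (i : Fin m) : Integrable (fun x => (x i) ^ 2) μ := by
  refine (integrable_normSq h).mono ((measurable_coordSq i).aestronglyMeasurable)
    (ae_of_all _ fun x => ?_)
  rw [Real.norm_eq_abs, Real.norm_eq_abs, abs_of_nonneg (sq_nonneg _),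
    abs_of_nonneg (sq_nonneg _)]
  exact coordSq_le_normSq i x

lemma integral_coordSq_dilate {m : ℕ} (θ : Fin m → ℝ)
    (ν₀ : Measure (EuclideanSpace ℝ (Fin m))) (i : Fin m) :
    ∫ x, (x i) ^ 2 ∂(dilate θ ν₀) = (θ i) ^ 2 * ∫ x, (x i) ^ 2 ∂ν₀ := by
  rw [dilate, integral_map (β := EuclideanSpace ℝ (Fin m)) (measurable_dil θ).aemeasurable
    ((measurable_coordSq i).aestronglyMeasurable)]
  simp only [WithLp.ofLp_toLp, mul_pow]
  rw [integral_const_mul]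

lemma integrable_coordSq_dilate {m : ℕ} {ν₀ : Measure (EuclideanSpace ℝ (Fin m))}
    (hmom : FiniteSecondMoment ν₀) (θ : Fin m → ℝ) (i : Fin m) :
    Integrable (fun x => (x i) ^ 2) (dilate θ ν₀) := by
  rw [dilate, integrable_map_measure ((measurable_coordSq i).aestronglyMeasurable)
    (measurable_dil θ).aemeasurable]
  have := (integrable_coordSq hmom i).const_mul ((θ i) ^ 2)
  refine this.congr (ae_of_all _ fun x => ?_)
  simp [Function.comp, mul_pow]

lemma key_pt (a u v : ℝ) (ha : 0 < a) :
    (1 - a) * u ^ 2 + (1 - a⁻¹) * v ^ 2 ≤ (u - v) ^ 2 := by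
  have hb : a * a⁻¹ = 1 := mul_inv_cancel₀ ha.ne'
  have hbpos : 0 < a⁻¹ := inv_pos.mpr ha
  nlinarith [sq_nonneg (a * u - v), mul_pos ha hbpos, sq_nonneg u, sq_nonneg v]

lemma integrable_fst_coordSq {m : ℕ}
    {γ : Measure (EuclideanSpace ℝ (Fin m) × EuclideanSpace ℝ (Fin m))}
    {μ : Measure (EuclideanSpace ℝ (Fin m))} (h1 : γ.map Prod.fst = μ)
    (i : Fin m) (hi : Integrable (fun x => (x i) ^ 2) μ) :
    Integrable (fun p => (p.1 i) ^ 2) γ := by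
  have := (integrable_map_measure (f := (Prod.fst : _ → EuclideanSpace ℝ (Fin m)))
    (g := fun x => (x i) ^ 2) (μ := γ) (by rw [h1]; exact hi.1)
    measurable_fst.aemeasurable).mp (by rwa [h1])
  exact this

lemma integrable_snd_coordSq {m : ℕ}
    {γ : Measure (EuclideanSpace ℝ (Fin m) × EuclideanSpace ℝ (Fin m))}
    {μ : Measure (EuclideanSpace ℝ (Fin m))} (h2 : γ.map Prod.snd = μ)
    (i : Fin m) (hi : Integrable (fun x => (x i) ^ 2) μ) :
    Integrable (fun p => (p.2 i) ^ 2) γ := by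
  have := (integrable_map_measure (f := (Prod.snd : _ → EuclideanSpace ℝ (Fin m)))
    (g := fun x => (x i) ^ 2) (μ := γ) (by rw [h2]; exact hi.1)
    measurable_snd.aemeasurable).mp (by rwa [h2])
  exact this

lemma integral_fst_coordSq {m : ℕ}
    {γ : Measure (EuclideanSpace ℝ (Fin m) × EuclideanSpace ℝ (Fin m))}
    {μ : Measure (EuclideanSpace ℝ (Fin m))} (h1 : γ.map Prod.fst = μ) (i : Fin m) :
    ∫ p, (p.1 i) ^ 2 ∂γ = ∫ x, (x i) ^ 2 ∂μ := by
  rw [← h1, integral_map measurable_fst.aemeasurable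
    ((measurable_coordSq i).aestronglyMeasurable)]

lemma integral_snd_coordSq {m : ℕ}
    {γ : Measure (EuclideanSpace ℝ (Fin m) × EuclideanSpace ℝ (Fin m))}
    {μ : Measure (EuclideanSpace ℝ (Fin m))} (h2 : γ.map Prod.snd = μ) (i : Fin m) :
    ∫ p, (p.2 i) ^ 2 ∂γ = ∫ x, (x i) ^ 2 ∂μ := by
  rw [← h2, integral_map measurable_snd.aemeasurable
    ((measurable_coordSq i).aestronglyMeasurable)]

lemma cost_lower {m : ℕ} (ν₀ : Measure (EuclideanSpace ℝ (Fin m))) [IsProbabilityMeasure ν₀]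
    (hmom : FiniteSecondMoment ν₀)
    (θ θ' : Fin m → ℝ) (hθ : ∀ i, 0 < θ i) (hθ' : ∀ i, 0 < θ' i)
    (γ : Measure (EuclideanSpace ℝ (Fin m) × EuclideanSpace ℝ (Fin m)))
    (h1 : γ.map Prod.fst = dilate θ ν₀) (h2 : γ.map Prod.snd = dilate θ' ν₀) :
    ENNReal.ofReal (∑ i, (θ i - θ' i) ^ 2 * ∫ x, (x i) ^ 2 ∂ν₀) ≤
      ∫⁻ p, ENNReal.ofReal (‖p.1 - p.2‖ ^ 2) ∂γ := by
  by_cases htop : ∫⁻ p, ENNReal.ofReal (‖p.1 - p.2‖ ^ 2) ∂γ = ⊤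
  · rw [htop]; exact le_top
  -- the cost function g
  set g : EuclideanSpace ℝ (Fin m) × EuclideanSpace ℝ (Fin m) → ℝ :=
    fun p => ‖p.1 - p.2‖ ^ 2 with hg
  have hgcont : Continuous g := ((continuous_fst.sub continuous_snd).norm.pow 2)
  have hgnonneg : ∀ p, 0 ≤ g p := fun p => sq_nonneg _
  have hgint : Integrable g γ := by
    refine ⟨hgcont.aestronglyMeasurable, ?_⟩
    rw [hasFiniteIntegral_iff_norm]
    have : ∀ p : EuclideanSpace ℝ (Fin m) × EuclideanSpace ℝ (Fin m),
        ENNReal.ofReal ‖g p‖ = ENNReal.ofReal (g p) := fun p => by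
      rw [Real.norm_eq_abs, abs_of_nonneg (hgnonneg p)]
    simp_rw [this]
    exact lt_top_iff_ne_top.mpr htop
  -- the comparison function h
  set h : EuclideanSpace ℝ (Fin m) × EuclideanSpace ℝ (Fin m) → ℝ :=
    fun p => ∑ i, ((1 - θ' i / θ i) * (p.1 i) ^ 2 + (1 - (θ' i / θ i)⁻¹) * (p.2 i) ^ 2)
    with hh
  have hint1 : ∀ i : Fin m, Integrable (fun p => (p.1 i) ^ 2) γ := fun i =>
    integrable_fst_coordSq h1 i (integrable_coordSq_dilate hmom θ i)
  have hint2 : ∀ i : Fin m, Integrable (fun p => (p.2 i) ^ 2) γ := fun i =>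
    integrable_snd_coordSq h2 i (integrable_coordSq_dilate hmom θ' i)
  have hhint : Integrable h γ := by
    refine integrable_finset_sum _ fun i _ => ?_
    exact ((hint1 i).const_mul _).add ((hint2 i).const_mul _)
  have hle : ∀ p, h p ≤ g p := by
    intro p
    have hgp : g p = ∑ i, (p.1 i - p.2 i) ^ 2 := by
      show ‖p.1 - p.2‖ ^ 2 = _
      rw [normSq_eq]
      rfl
    rw [hgp, hh]
    refine Finset.sum_le_sum fun i _ => ?_
    exact key_pt _ _ _ (div_pos (hθ' i) (hθ i))
  -- value of ∫ h
  have hhval : ∫ p, h p ∂γ = ∑ i, (θ i - θ' i) ^ 2 * ∫ x, (x i) ^ 2 ∂ν₀ := by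
    simp only [hh]
    rw [integral_finset_sum (f := fun i (p : EuclideanSpace ℝ (Fin m) × EuclideanSpace ℝ (Fin m)) =>
        (1 - θ' i / θ i) * (p.1 i) ^ 2 + (1 - (θ' i / θ i)⁻¹) * (p.2 i) ^ 2) _
      (fun i _ => ((hint1 i).const_mul _).add ((hint2 i).const_mul _))]
    refine Finset.sum_congr rfl fun i _ => ?_
    rw [integral_add ((hint1 i).const_mul _) ((hint2 i).const_mul _),
      integral_const_mul, integral_const_mul, integral_fst_coordSq h1 i,
      integral_snd_coordSq h2 i, integral_coordSq_dilate, integral_coordSq_dilate]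
    have hti := (hθ i).ne'
    have hti' := (hθ' i).ne'
    field_simp
    ring
  rw [← ofReal_integral_eq_lintegral_ofReal hgint (ae_of_all _ hgnonneg)]
  refine ENNReal.ofReal_le_ofReal ?_
  rw [← hhval]
  exact integral_mono hhint hgint hle

lemma diff_normSq {m : ℕ} (u v : EuclideanSpace ℝ (Fin m)) :
    ‖u - v‖ ^ 2 = ∑ i, (u i - v i) ^ 2 := by
  rw [normSq_eq]
  rfl

lemma cost_diag {m : ℕ} (ν₀ : Measure (EuclideanSpace ℝ (Fin m))) [IsProbabilityMeasure ν₀]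
    (hmom : FiniteSecondMoment ν₀) (θ θ' : Fin m → ℝ) :
    ∫⁻ p, ENNReal.ofReal (‖p.1 - p.2‖ ^ 2)
        ∂(ν₀.map (fun x => (WithLp.toLp 2 (fun i => θ i * x i), WithLp.toLp 2 (fun i => θ' i * x i)) :
          EuclideanSpace ℝ (Fin m) →
            EuclideanSpace ℝ (Fin m) × EuclideanSpace ℝ (Fin m))) =
      ENNReal.ofReal (∑ i, (θ i - θ' i) ^ 2 * ∫ x, (x i) ^ 2 ∂ν₀) := by
  have hf : Measurable (fun x : EuclideanSpace ℝ (Fin m) =>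
      ((WithLp.toLp 2 (fun i => θ i * x i) : EuclideanSpace ℝ (Fin m)),
       (WithLp.toLp 2 (fun i => θ' i * x i) : EuclideanSpace ℝ (Fin m)))) :=
    (measurable_dil θ).prodMk (measurable_dil θ')
  have hgm : Measurable (fun p : EuclideanSpace ℝ (Fin m) × EuclideanSpace ℝ (Fin m) =>
      ENNReal.ofReal (‖p.1 - p.2‖ ^ 2)) :=
    (((continuous_fst.sub continuous_snd).norm.pow 2).measurable).ennreal_ofReal
  rw [lintegral_map hgm hf]
  simp_rw [diff_normSq, ← sub_mul, mul_pow]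
  have hintsum : Integrable (fun x : EuclideanSpace ℝ (Fin m) =>
      ∑ i, (θ i - θ' i) ^ 2 * (x i) ^ 2) ν₀ :=
    integrable_finset_sum _ fun i _ => (integrable_coordSq hmom i).const_mul _
  rw [← ofReal_integral_eq_lintegral_ofReal hintsum (ae_of_all _ fun x =>
    Finset.sum_nonneg fun i _ => mul_nonneg (sq_nonneg _) (sq_nonneg _))]
  congr 1
  rw [integral_finset_sum _ (fun i _ => (integrable_coordSq hmom i).const_mul _)]
  exact Finset.sum_congr rfl fun i _ => integral_const_mul _ _


/-- For an arbitrary `ν₀ ∈ 𝕎₂(ℝ^m)` (not necessarily absolutely continuous)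
and `θ, θ'` with strictly positive entries,
`W₂(ν_θ, ν_{θ'})² = Σᵢ |θᵢ − θ'ᵢ|² ∫ |xᵢ|² dν₀(x)`. -/
theorem wasserstein_dilation_general {m : ℕ}
    (ν₀ : Measure (EuclideanSpace ℝ (Fin m))) [IsProbabilityMeasure ν₀]
    (hmom : FiniteSecondMoment ν₀)
    (θ θ' : Fin m → ℝ) (hθ : ∀ i, 0 < θ i) (hθ' : ∀ i, 0 < θ' i) :
    (W2 (dilate θ ν₀) (dilate θ' ν₀)) ^ 2 =
      ENNReal.ofReal (∑ i, |θ i - θ' i| ^ 2 * ∫ x, (x i) ^ 2 ∂ν₀) := by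
  simp_rw [sq_abs]
  have hkey : W2 (dilate θ ν₀) (dilate θ' ν₀) ^ 2 =
      ⨅ (γ : Measure (EuclideanSpace ℝ (Fin m) × EuclideanSpace ℝ (Fin m)))
        (_ : IsProbabilityMeasure γ) (_ : γ.map Prod.fst = dilate θ ν₀)
        (_ : γ.map Prod.snd = dilate θ' ν₀),
        ∫⁻ p, ENNReal.ofReal (‖p.1 - p.2‖ ^ 2) ∂γ := by
    have hpow : ∀ a : ℝ≥0∞, a ^ 2 = ENNReal.orderIsoRpow 2 (by norm_num) a := by
      intro a
      rw [ENNReal.orderIsoRpow_apply]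
      rw [show (2 : ℝ) = ((2 : ℕ) : ℝ) by norm_num, ENNReal.rpow_natCast]
    rw [W2, hpow]
    simp only [OrderIso.map_iInf]
    refine iInf_congr fun γ => iInf_congr fun _ => iInf_congr fun _ => iInf_congr fun _ => ?_
    rw [ENNReal.orderIsoRpow_apply, ← ENNReal.rpow_mul]
    norm_num
  rw [hkey]
  set F : EuclideanSpace ℝ (Fin m) →
      EuclideanSpace ℝ (Fin m) × EuclideanSpace ℝ (Fin m) :=
    fun x => (WithLp.toLp 2 (fun i => θ i * x i), WithLp.toLp 2 (fun i => θ' i * x i)) with hF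
  have hfm : Measurable F := (measurable_dil θ).prodMk (measurable_dil θ')
  refine le_antisymm ?_ ?_
  · refine iInf_le_of_le (ν₀.map F) ?_
    have hprob : IsProbabilityMeasure (ν₀.map F) :=
      Measure.isProbabilityMeasure_map hfm.aemeasurable
    refine iInf_le_of_le hprob ?_
    have hm1 : (ν₀.map F).map Prod.fst = dilate θ ν₀ := by
      rw [Measure.map_map measurable_fst hfm]; rfl
    have hm2 : (ν₀.map F).map Prod.snd = dilate θ' ν₀ := by
      rw [Measure.map_map measurable_snd hfm]; rfl
    refine iInf_le_of_le hm1 (iInf_le_of_le hm2 ?_)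
    exact le_of_eq (cost_diag ν₀ hmom θ θ')
  · exact le_iInf fun γ => le_iInf fun _ => le_iInf fun hm1 => le_iInf fun hm2 =>
      cost_lower ν₀ hmom θ θ' hθ hθ' γ hm1 hm2
end
end

section
/- Let μ₀ be an absolutely continuous probability measure on ℝ² with density f satisfying f(x₁,x₂) = f(x₂,x₁) for all (x₁,x₂) (symmetry about the line x₁ = x₂), and with finite second moment. Let θ = (θ₁,θ₂) and θ' = (θ'₁,θ'₂) have strictly positive entries, and let μ_θ, μ_{θ'} be the dilations of μ₀ by θ and θ'. Then W₂(μ_θ, μ_{θ'})² = [(θ₁ − θ'₁)² + (θ₂ − θ'₂)²] · ∫_{{x₂ ≥ x₁}} (x₁² + x₂²) f(x) dx. -/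
open MeasureTheory Filter Set
open scoped ENNReal NNReal

noncomputable section

namespace WdsAux
abbrev E2 := EuclideanSpace ℝ (Fin 2)
lemma coord_meas (i : Fin 2) : Measurable fun x : E2 => x i :=
  (measurable_pi_apply i).comp (WithLp.measurable_ofLp 2 _)
lemma norm_sq_eq (x : E2) : ‖x‖ ^ 2 = (x 0) ^ 2 + (x 1) ^ 2 := by
  rw [EuclideanSpace.norm_eq, Real.sq_sqrt (by positivity)]
  simp [Fin.sum_univ_two, sq_abs]
lemma T_meas (θ : Fin 2 → ℝ) : Measurable fun x : E2 => (WithLp.toLp 2 (fun i => θ i * x i) : E2) :=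
  (WithLp.measurable_toLp 2 _).comp (measurable_pi_lambda _ fun i => (coord_meas i).const_mul _)
lemma vec_eta (x : E2) : (WithLp.toLp 2 ![x 0, x 1] : E2) = x := by
  ext i; fin_cases i <;> simp
def sw : E2 ≃ₗᵢ[ℝ] E2 := LinearIsometryEquiv.piLpCongrLeft 2 ℝ ℝ (Equiv.swap 0 1)
lemma sw_apply (x : E2) (i : Fin 2) : sw x i = x (Equiv.swap 0 1 i) := by
  simp [sw, LinearIsometryEquiv.piLpCongrLeft_apply, Equiv.piCongrLeft'_apply]
lemma sw_apply0 (x : E2) : sw x 0 = x 1 := by rw [sw_apply, Equiv.swap_apply_left]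
lemma sw_apply1 (x : E2) : sw x 1 = x 0 := by rw [sw_apply, Equiv.swap_apply_right]
def dmap : E2 →ₗ[ℝ] ℝ where
  toFun x := x 0 - x 1
  map_add' x y := by simp [PiLp.add_apply]; ring
  map_smul' c x := by simp [PiLp.smul_apply, smul_eq_mul]; ring
lemma diag_null : (volume : Measure E2) {x : E2 | x 0 = x 1} = 0 := by
  have h : {x : E2 | x 0 = x 1} = (LinearMap.ker dmap : Set E2) := by
    ext x; simp [LinearMap.mem_ker, dmap, sub_eq_zero]
  rw [h]
  apply Measure.addHaar_submodule
  intro htop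
  have : (EuclideanSpace.single 0 (1:ℝ) : E2) ∈ LinearMap.ker dmap := htop ▸ Submodule.mem_top
  simp [LinearMap.mem_ker, dmap, EuclideanSpace.single_apply] at this
lemma q_meas (i : Fin 2) : Measurable fun x : E2 => ENNReal.ofReal ((x i) ^ 2) :=
  ((coord_meas i).pow_const 2).ennreal_ofReal
lemma quad_meas (c0 c1 : ℝ) :
    Measurable fun x : E2 => ENNReal.ofReal (c0 * (x 0) ^ 2 + c1 * (x 1) ^ 2) :=
  ((((coord_meas 0).pow_const 2).const_mul c0).add
    (((coord_meas 1).pow_const 2).const_mul c1)).ennreal_ofReal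
lemma lint_quad (μ : Measure E2) (c0 c1 : ℝ) (h0 : 0 ≤ c0) (h1 : 0 ≤ c1) :
    ∫⁻ x, ENNReal.ofReal (c0 * (x 0) ^ 2 + c1 * (x 1) ^ 2) ∂μ =
      ENNReal.ofReal c0 * ∫⁻ x, ENNReal.ofReal ((x 0) ^ 2) ∂μ +
      ENNReal.ofReal c1 * ∫⁻ x, ENNReal.ofReal ((x 1) ^ 2) ∂μ := by
  have e : ∀ x : E2, ENNReal.ofReal (c0 * (x 0) ^ 2 + c1 * (x 1) ^ 2) =
      ENNReal.ofReal c0 * ENNReal.ofReal ((x 0) ^ 2) +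
      ENNReal.ofReal c1 * ENNReal.ofReal ((x 1) ^ 2) := by
    intro x
    rw [ENNReal.ofReal_add (by positivity) (by positivity),
      ENNReal.ofReal_mul h0, ENNReal.ofReal_mul h1]
  simp_rw [e]
  rw [lintegral_add_left ((q_meas 0).const_mul _), lintegral_const_mul _ (q_meas 0),
    lintegral_const_mul _ (q_meas 1)]
lemma young (s t a b : ℝ) (hs : 0 < s) (ht : 0 < t) :
    a ^ 2 + b ^ 2 ≤ (a - b) ^ 2 + (t / s * a ^ 2 + s / t * b ^ 2) := by
  have h0 : 0 ≤ (t * a - s * b) ^ 2 / (s * t) := div_nonneg (sq_nonneg _) (by positivity)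
  have h1 : (t * a - s * b) ^ 2 / (s * t) = t / s * a ^ 2 + s / t * b ^ 2 - 2 * (a * b) := by
    field_simp; ring
  nlinarith [sq_nonneg (a - b)]
end WdsAux

open WdsAux in
/-- Let `μ₀` be an absolutely continuous probability measure on `ℝ²` with density
`f` symmetric about the line `x₁ = x₂`, and with finite second moment. Then for dilations by
`θ, θ'` with strictly positive entries,
`W₂(μ_θ, μ_{θ'})² = [(θ₁−θ'₁)² + (θ₂−θ'₂)²] ∫_{x₂ ≥ x₁} (x₁² + x₂²) f(x) dx`. -/
theorem wasserstein_dilation_symmetric_density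
    (f : EuclideanSpace ℝ (Fin 2) → ℝ) (hf : Measurable f) (hf0 : ∀ x, 0 ≤ f x)
    (hsymm : ∀ x₁ x₂ : ℝ, f (WithLp.toLp 2 ![x₁, x₂]) = f (WithLp.toLp 2 ![x₂, x₁]))
    (hprob : IsProbabilityMeasure (volume.withDensity (fun x => ENNReal.ofReal (f x))))
    (hmom : FiniteSecondMoment (volume.withDensity (fun x => ENNReal.ofReal (f x))))
    (θ θ' : Fin 2 → ℝ) (hθ : ∀ i, 0 < θ i) (hθ' : ∀ i, 0 < θ' i) :
    (W2 (dilate θ (volume.withDensity (fun x => ENNReal.ofReal (f x))))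
        (dilate θ' (volume.withDensity (fun x => ENNReal.ofReal (f x))))) ^ 2 =
      ENNReal.ofReal (((θ 0 - θ' 0) ^ 2 + (θ 1 - θ' 1) ^ 2) *
        ∫ x in {x : EuclideanSpace ℝ (Fin 2) | x 0 ≤ x 1}, ((x 0) ^ 2 + (x 1) ^ 2) * f x) := by
  classical
  set μ₀ : Measure E2 := volume.withDensity (fun x => ENNReal.ofReal (f x)) with hμ₀def
  haveI : IsProbabilityMeasure μ₀ := hprob
  have hfm : Measurable fun x : E2 => ENNReal.ofReal (f x) := hf.ennreal_ofReal
  set M : Fin 2 → ℝ≥0∞ := fun i => ∫⁻ x, ENNReal.ofReal ((x i) ^ 2) ∂μ₀ with hMdef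
  -- second moment splits
  have hmom_split : ∫⁻ x, ENNReal.ofReal (‖x‖ ^ 2) ∂μ₀ = M 0 + M 1 := by
    have e : ∀ x : E2, ENNReal.ofReal (‖x‖ ^ 2) =
        ENNReal.ofReal ((x 0) ^ 2) + ENNReal.ofReal ((x 1) ^ 2) := fun x => by
      rw [norm_sq_eq, ENNReal.ofReal_add (sq_nonneg _) (sq_nonneg _)]
    simp_rw [e]
    rw [lintegral_add_left (q_meas 0)]
  have hM0fin : M 0 ≠ ⊤ := by
    intro h
    exact hmom (by rw [hmom_split, h]; simp)
  have hM1fin : M 1 ≠ ⊤ := by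
    intro h
    exact hmom (by rw [hmom_split, h]; simp)
  -- withDensity form
  have hwd : ∀ g : E2 → ℝ≥0∞, Measurable g →
      ∫⁻ x, g x ∂μ₀ = ∫⁻ x, ENNReal.ofReal (f x) * g x ∂(volume : Measure E2) := by
    intro g hg
    rw [hμ₀def, lintegral_withDensity_eq_lintegral_mul _ hfm hg]
    rfl
  -- symmetry of f under swap
  have hfsw : ∀ x : E2, f (sw x) = f x := by
    intro x
    have h1 : (sw x : E2) = WithLp.toLp 2 ![x 1, x 0] := by
      ext i; fin_cases i <;> simp [sw_apply0, sw_apply1]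
    rw [h1, hsymm, vec_eta]
  have hswmp : MeasurePreserving (⇑sw) (volume : Measure E2) volume := sw.measurePreserving
  -- M 0 = M 1
  have hMsymm : M 0 = M 1 := by
    rw [hMdef]
    simp only
    rw [hwd _ (q_meas 0), hwd _ (q_meas 1)]
    rw [← hswmp.lintegral_comp
      (f := fun x : E2 => ENNReal.ofReal (f x) * ENNReal.ofReal ((x 0) ^ 2)) (hfm.mul (q_meas 0))]
    refine lintegral_congr fun x => ?_
    simp only [hfsw, sw_apply0]
  -- half-plane set
  set S : Set E2 := {x : E2 | x 0 ≤ x 1} with hSdef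
  have hSmeas : MeasurableSet S := measurableSet_le (coord_meas 0) (coord_meas 1)
  have hhm : Measurable fun x : E2 => ENNReal.ofReal (((x 0) ^ 2 + (x 1) ^ 2) * f x) :=
    ((((coord_meas 0).pow_const 2).add ((coord_meas 1).pow_const 2)).mul hf).ennreal_ofReal
  set IS : ℝ≥0∞ := ∫⁻ x in S, ENNReal.ofReal (((x 0) ^ 2 + (x 1) ^ 2) * f x) ∂(volume : Measure E2) with hISdef
  -- total integral
  have htotal : ∫⁻ x, ENNReal.ofReal (((x 0) ^ 2 + (x 1) ^ 2) * f x) ∂(volume : Measure E2)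
      = M 0 + M 1 := by
    have e : ∀ x : E2, ENNReal.ofReal (((x 0) ^ 2 + (x 1) ^ 2) * f x) =
        ENNReal.ofReal (f x) * ENNReal.ofReal ((x 0) ^ 2) +
        ENNReal.ofReal (f x) * ENNReal.ofReal ((x 1) ^ 2) := fun x => by
      rw [← mul_add, ← ENNReal.ofReal_add (sq_nonneg _) (sq_nonneg _),
        ← ENNReal.ofReal_mul (hf0 x), mul_comm]
    simp_rw [e]
    rw [lintegral_add_left
      (f := fun x : E2 => ENNReal.ofReal (f x) * ENNReal.ofReal ((x 0) ^ 2)) (hfm.mul (q_meas 0)), ← hwd _ (q_meas 0), ← hwd _ (q_meas 1)]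
  -- complement integral equals IS
  have hcompl : ∫⁻ x in Sᶜ, ENNReal.ofReal (((x 0) ^ 2 + (x 1) ^ 2) * f x) ∂(volume : Measure E2)
      = IS := by
    have hpre : ⇑sw ⁻¹' Sᶜ = {x : E2 | x 0 < x 1} := by
      ext x
      simp only [Set.mem_preimage, Set.mem_compl_iff, hSdef, Set.mem_setOf_eq,
        sw_apply0, sw_apply1, not_le]
    calc ∫⁻ x in Sᶜ, ENNReal.ofReal (((x 0) ^ 2 + (x 1) ^ 2) * f x) ∂(volume : Measure E2)
        = ∫⁻ x in Sᶜ, ENNReal.ofReal (((x 0) ^ 2 + (x 1) ^ 2) * f x)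
            ∂((volume : Measure E2).map ⇑sw) := by rw [hswmp.map_eq]
      _ = ∫⁻ x in ⇑sw ⁻¹' Sᶜ, ENNReal.ofReal (((sw x 0) ^ 2 + (sw x 1) ^ 2) * f (sw x))
            ∂(volume : Measure E2) := setLIntegral_map hSmeas.compl hhm hswmp.measurable
      _ = ∫⁻ x in {x : E2 | x 0 < x 1}, ENNReal.ofReal (((x 0) ^ 2 + (x 1) ^ 2) * f x)
            ∂(volume : Measure E2) := by
          rw [hpre]
          refine lintegral_congr fun x => ?_
          rw [sw_apply0, sw_apply1, hfsw]
          congr 1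
          ring
      _ = IS := by
          rw [hISdef]
          congr 1
          refine Measure.restrict_congr_set (MeasureTheory.ae_eq_set.2 ⟨?_, ?_⟩)
          · refine measure_mono_null ?_ diag_null
            intro x hx
            simp only [hSdef, Set.mem_diff, Set.mem_setOf_eq] at hx
            exact absurd (le_of_lt hx.1) hx.2
          · refine measure_mono_null ?_ diag_null
            intro x hx
            simp only [hSdef, Set.mem_diff, Set.mem_setOf_eq, not_lt] at hx
            exact Set.mem_setOf_eq ▸ le_antisymm hx.1 hx.2
  have hIS : IS = M 0 := by
    have hsum : (2:ℝ≥0∞) * IS = 2 * M 0 := by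
      rw [two_mul, two_mul]
      nth_rewrite 2 [← hcompl]
      rw [hISdef, lintegral_add_compl _ hSmeas, htotal, ← hMsymm]
    exact (ENNReal.mul_right_inj two_ne_zero (by norm_num)).mp hsum
  have hISfin : IS ≠ ⊤ := by rw [hIS]; exact hM0fin
  -- the real integral equals toReal IS
  have hreal : (∫ x in S, ((x 0) ^ 2 + (x 1) ^ 2) * f x) = IS.toReal := by
    rw [hISdef]
    rw [integral_eq_lintegral_of_nonneg_ae]
    · exact Filter.Eventually.of_forall fun x => mul_nonneg (by positivity) (hf0 x)
    · exact ((((coord_meas 0).pow_const 2).add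
        ((coord_meas 1).pow_const 2)).mul hf).aestronglyMeasurable
  -- the RHS equals K
  set K : ℝ≥0∞ := ENNReal.ofReal ((θ 0 - θ' 0) ^ 2) * M 0 +
      ENNReal.ofReal ((θ 1 - θ' 1) ^ 2) * M 1 with hKdef
  have hRHS : ENNReal.ofReal (((θ 0 - θ' 0) ^ 2 + (θ 1 - θ' 1) ^ 2) *
      ∫ x in S, ((x 0) ^ 2 + (x 1) ^ 2) * f x) = K := by
    rw [hreal, ENNReal.ofReal_mul (by positivity), ENNReal.ofReal_toReal hISfin, hIS,
      ENNReal.ofReal_add (sq_nonneg _) (sq_nonneg _), hKdef, ← hMsymm, add_mul]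
  rw [hRHS]
  -- dilation quadratic lintegral formula
  have hne : ∀ i, θ i ≠ 0 := fun i => (hθ i).ne'
  have hne' : ∀ i, θ' i ≠ 0 := fun i => (hθ' i).ne'
  have hdil : ∀ (ϑ : Fin 2 → ℝ) (c0 c1 : ℝ), 0 ≤ c0 → 0 ≤ c1 →
      ∫⁻ x, ENNReal.ofReal (c0 * (x 0) ^ 2 + c1 * (x 1) ^ 2) ∂(dilate ϑ μ₀) =
        ENNReal.ofReal (c0 * (ϑ 0) ^ 2) * M 0 + ENNReal.ofReal (c1 * (ϑ 1) ^ 2) * M 1 := by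
    intro ϑ c0 c1 h0 h1
    rw [dilate, lintegral_map (quad_meas c0 c1) (T_meas ϑ)]
    have step : ∫⁻ x, ENNReal.ofReal (c0 * ((WithLp.toLp 2 (fun i => ϑ i * x i) : E2) 0) ^ 2
        + c1 * ((WithLp.toLp 2 (fun i => ϑ i * x i) : E2) 1) ^ 2) ∂μ₀
        = ∫⁻ x, ENNReal.ofReal ((c0 * (ϑ 0) ^ 2) * (x 0) ^ 2 + (c1 * (ϑ 1) ^ 2) * (x 1) ^ 2) ∂μ₀ := by
      refine lintegral_congr fun x => ?_
      congr 1
      show c0 * (ϑ 0 * x 0) ^ 2 + c1 * (ϑ 1 * x 1) ^ 2 = _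
      ring
    rw [step, lint_quad μ₀ _ _ (by positivity) (by positivity)]
  have hnormmeas : Measurable fun x : E2 => ENNReal.ofReal (‖x‖ ^ 2) :=
    (measurable_norm.pow_const 2).ennreal_ofReal
  have hnormdil : ∀ ϑ : Fin 2 → ℝ, ∫⁻ x, ENNReal.ofReal (‖x‖ ^ 2) ∂(dilate ϑ μ₀) =
      ENNReal.ofReal ((ϑ 0) ^ 2) * M 0 + ENNReal.ofReal ((ϑ 1) ^ 2) * M 1 := by
    intro ϑ
    have step : ∫⁻ x, ENNReal.ofReal (‖x‖ ^ 2) ∂(dilate ϑ μ₀)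
        = ∫⁻ x, ENNReal.ofReal (1 * (x 0) ^ 2 + 1 * (x 1) ^ 2) ∂(dilate ϑ μ₀) := by
      refine lintegral_congr fun x => ?_
      rw [norm_sq_eq]; ring_nf
    rw [step, hdil ϑ 1 1 zero_le_one zero_le_one, one_mul, one_mul]
  have hsubmeas : Measurable fun p : E2 × E2 => ENNReal.ofReal (‖p.1 - p.2‖ ^ 2) :=
    (((measurable_fst.sub measurable_snd).norm).pow_const 2).ennreal_ofReal
  have hW : W2 (dilate θ μ₀) (dilate θ' μ₀) = K ^ (1 / 2 : ℝ) := by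
    unfold W2
    apply le_antisymm
    · -- upper bound via the explicit coupling
      set F : E2 → E2 × E2 :=
        fun x => ((WithLp.toLp 2 (fun i => θ i * x i) : E2), (WithLp.toLp 2 (fun i => θ' i * x i) : E2)) with hFdef
      have hFmeas : Measurable F := (T_meas θ).prodMk (T_meas θ')
      have hγprob : IsProbabilityMeasure (μ₀.map F) :=
        Measure.isProbabilityMeasure_map hFmeas.aemeasurable
      have hfst2 : (μ₀.map F).map Prod.fst = dilate θ μ₀ := by
        rw [Measure.map_map measurable_fst hFmeas]; rfl
      have hsnd2 : (μ₀.map F).map Prod.snd = dilate θ' μ₀ := by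
        rw [Measure.map_map measurable_snd hFmeas]; rfl
      have hcost : ∫⁻ p, ENNReal.ofReal (‖p.1 - p.2‖ ^ 2) ∂(μ₀.map F) = K := by
        rw [lintegral_map hsubmeas hFmeas]
        have step : ∫⁻ x, ENNReal.ofReal (‖(F x).1 - (F x).2‖ ^ 2) ∂μ₀
            = ∫⁻ x, ENNReal.ofReal ((θ 0 - θ' 0) ^ 2 * (x 0) ^ 2
                + (θ 1 - θ' 1) ^ 2 * (x 1) ^ 2) ∂μ₀ := by
          refine lintegral_congr fun x => ?_
          congr 1
          rw [norm_sq_eq]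
          have h0 : ((F x).1 - (F x).2) 0 = (θ 0 - θ' 0) * x 0 := by
            rw [PiLp.sub_apply]
            show θ 0 * x 0 - θ' 0 * x 0 = _
            ring
          have h1 : ((F x).1 - (F x).2) 1 = (θ 1 - θ' 1) * x 1 := by
            rw [PiLp.sub_apply]
            show θ 1 * x 1 - θ' 1 * x 1 = _
            ring
          rw [h0, h1]; ring
        rw [step, lint_quad μ₀ _ _ (sq_nonneg _) (sq_nonneg _), hKdef]
      calc (⨅ (γ : Measure (E2 × E2)) (_ : IsProbabilityMeasure γ)
            (_ : γ.map Prod.fst = dilate θ μ₀) (_ : γ.map Prod.snd = dilate θ' μ₀),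
            (∫⁻ p, ENNReal.ofReal (‖p.1 - p.2‖ ^ 2) ∂γ) ^ (1 / 2 : ℝ))
          ≤ (∫⁻ p, ENNReal.ofReal (‖p.1 - p.2‖ ^ 2) ∂(μ₀.map F)) ^ (1 / 2 : ℝ) :=
            iInf_le_of_le (μ₀.map F) (iInf_le_of_le hγprob
              (iInf_le_of_le hfst2 (iInf_le_of_le hsnd2 le_rfl)))
        _ = K ^ (1 / 2 : ℝ) := by rw [hcost]
    · refine le_iInf fun γ => le_iInf fun hγ => le_iInf fun hfstm => le_iInf fun hsndm => ?_
      refine ENNReal.rpow_le_rpow ?_ (by norm_num)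
      -- K ≤ transport cost of γ
      have hm1 : Measurable fun p : E2 × E2 => ENNReal.ofReal (‖p.1‖ ^ 2) :=
        hnormmeas.comp measurable_fst
      have hm2 : Measurable fun p : E2 × E2 => ENNReal.ofReal (‖p.2‖ ^ 2) :=
        hnormmeas.comp measurable_snd
      have hg1m : Measurable fun p : E2 × E2 =>
          ENNReal.ofReal (θ' 0 / θ 0 * (p.1 0) ^ 2 + θ' 1 / θ 1 * (p.1 1) ^ 2) :=
        (quad_meas _ _).comp measurable_fst
      have hg2m : Measurable fun p : E2 × E2 =>
          ENNReal.ofReal (θ 0 / θ' 0 * (p.2 0) ^ 2 + θ 1 / θ' 1 * (p.2 1) ^ 2) :=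
        (quad_meas _ _).comp measurable_snd
      have hSx : ∫⁻ p, ENNReal.ofReal (‖p.1‖ ^ 2) ∂γ =
          ENNReal.ofReal ((θ 0) ^ 2) * M 0 + ENNReal.ofReal ((θ 1) ^ 2) * M 1 := by
        calc ∫⁻ p, ENNReal.ofReal (‖p.1‖ ^ 2) ∂γ
            = ∫⁻ x, ENNReal.ofReal (‖x‖ ^ 2) ∂(γ.map Prod.fst) :=
              (lintegral_map hnormmeas measurable_fst).symm
          _ = _ := by rw [hfstm, hnormdil θ]
      have hSy : ∫⁻ p, ENNReal.ofReal (‖p.2‖ ^ 2) ∂γ =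
          ENNReal.ofReal ((θ' 0) ^ 2) * M 0 + ENNReal.ofReal ((θ' 1) ^ 2) * M 1 := by
        calc ∫⁻ p, ENNReal.ofReal (‖p.2‖ ^ 2) ∂γ
            = ∫⁻ x, ENNReal.ofReal (‖x‖ ^ 2) ∂(γ.map Prod.snd) :=
              (lintegral_map hnormmeas measurable_snd).symm
          _ = _ := by rw [hsndm, hnormdil θ']
      have hB1 : ∫⁻ p, ENNReal.ofReal (θ' 0 / θ 0 * (p.1 0) ^ 2 + θ' 1 / θ 1 * (p.1 1) ^ 2) ∂γ =
          ENNReal.ofReal (θ 0 * θ' 0) * M 0 + ENNReal.ofReal (θ 1 * θ' 1) * M 1 := by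
        calc ∫⁻ p, ENNReal.ofReal (θ' 0 / θ 0 * (p.1 0) ^ 2 + θ' 1 / θ 1 * (p.1 1) ^ 2) ∂γ
            = ∫⁻ x, ENNReal.ofReal (θ' 0 / θ 0 * (x 0) ^ 2 + θ' 1 / θ 1 * (x 1) ^ 2)
                ∂(γ.map Prod.fst) := (lintegral_map (quad_meas _ _) measurable_fst).symm
          _ = ENNReal.ofReal (θ' 0 / θ 0 * (θ 0) ^ 2) * M 0
              + ENNReal.ofReal (θ' 1 / θ 1 * (θ 1) ^ 2) * M 1 := by
              rw [hfstm, hdil θ _ _ (div_pos (hθ' 0) (hθ 0)).le (div_pos (hθ' 1) (hθ 1)).le]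
          _ = _ := by
              rw [show θ' 0 / θ 0 * (θ 0) ^ 2 = θ 0 * θ' 0 by field_simp [hne 0],
                show θ' 1 / θ 1 * (θ 1) ^ 2 = θ 1 * θ' 1 by field_simp [hne 1]]
      have hB2 : ∫⁻ p, ENNReal.ofReal (θ 0 / θ' 0 * (p.2 0) ^ 2 + θ 1 / θ' 1 * (p.2 1) ^ 2) ∂γ =
          ENNReal.ofReal (θ 0 * θ' 0) * M 0 + ENNReal.ofReal (θ 1 * θ' 1) * M 1 := by
        calc ∫⁻ p, ENNReal.ofReal (θ 0 / θ' 0 * (p.2 0) ^ 2 + θ 1 / θ' 1 * (p.2 1) ^ 2) ∂γ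
            = ∫⁻ x, ENNReal.ofReal (θ 0 / θ' 0 * (x 0) ^ 2 + θ 1 / θ' 1 * (x 1) ^ 2)
                ∂(γ.map Prod.snd) := (lintegral_map (quad_meas _ _) measurable_snd).symm
          _ = ENNReal.ofReal (θ 0 / θ' 0 * (θ' 0) ^ 2) * M 0
              + ENNReal.ofReal (θ 1 / θ' 1 * (θ' 1) ^ 2) * M 1 := by
              rw [hsndm, hdil θ' _ _ (div_pos (hθ 0) (hθ' 0)).le (div_pos (hθ 1) (hθ' 1)).le]
          _ = _ := by
              rw [show θ 0 / θ' 0 * (θ' 0) ^ 2 = θ 0 * θ' 0 by field_simp [hne' 0],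
                show θ 1 / θ' 1 * (θ' 1) ^ 2 = θ 1 * θ' 1 by field_simp [hne' 1]]
      -- pointwise Young inequality
      have hpt : ∀ p : E2 × E2, ENNReal.ofReal (‖p.1‖ ^ 2) + ENNReal.ofReal (‖p.2‖ ^ 2) ≤
          ENNReal.ofReal (‖p.1 - p.2‖ ^ 2) +
            (ENNReal.ofReal (θ' 0 / θ 0 * (p.1 0) ^ 2 + θ' 1 / θ 1 * (p.1 1) ^ 2) +
             ENNReal.ofReal (θ 0 / θ' 0 * (p.2 0) ^ 2 + θ 1 / θ' 1 * (p.2 1) ^ 2)) := by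
        intro p
        have hn1 : (0:ℝ) ≤ θ' 0 / θ 0 * (p.1 0) ^ 2 + θ' 1 / θ 1 * (p.1 1) ^ 2 :=
          add_nonneg (mul_nonneg (div_pos (hθ' 0) (hθ 0)).le (sq_nonneg _))
            (mul_nonneg (div_pos (hθ' 1) (hθ 1)).le (sq_nonneg _))
        have hn2 : (0:ℝ) ≤ θ 0 / θ' 0 * (p.2 0) ^ 2 + θ 1 / θ' 1 * (p.2 1) ^ 2 :=
          add_nonneg (mul_nonneg (div_pos (hθ 0) (hθ' 0)).le (sq_nonneg _))
            (mul_nonneg (div_pos (hθ 1) (hθ' 1)).le (sq_nonneg _))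
        rw [← ENNReal.ofReal_add (sq_nonneg _) (sq_nonneg _),
          ← ENNReal.ofReal_add hn1 hn2,
          ← ENNReal.ofReal_add (sq_nonneg _) (add_nonneg hn1 hn2)]
        apply ENNReal.ofReal_le_ofReal
        rw [norm_sq_eq p.1, norm_sq_eq p.2, norm_sq_eq (p.1 - p.2), PiLp.sub_apply,
          PiLp.sub_apply]
        have h0 := young (θ 0) (θ' 0) (p.1 0) (p.2 0) (hθ 0) (hθ' 0)
        have h1 := young (θ 1) (θ' 1) (p.1 1) (p.2 1) (hθ 1) (hθ' 1)
        linarith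
      -- integrate the pointwise inequality
      have hsum2 : ∫⁻ p, (ENNReal.ofReal (‖p.1 - p.2‖ ^ 2) +
          (ENNReal.ofReal (θ' 0 / θ 0 * (p.1 0) ^ 2 + θ' 1 / θ 1 * (p.1 1) ^ 2) +
           ENNReal.ofReal (θ 0 / θ' 0 * (p.2 0) ^ 2 + θ 1 / θ' 1 * (p.2 1) ^ 2))) ∂γ =
          (∫⁻ p, ENNReal.ofReal (‖p.1 - p.2‖ ^ 2) ∂γ) +
            ((ENNReal.ofReal (θ 0 * θ' 0) * M 0 + ENNReal.ofReal (θ 1 * θ' 1) * M 1) +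
             (ENNReal.ofReal (θ 0 * θ' 0) * M 0 + ENNReal.ofReal (θ 1 * θ' 1) * M 1)) := by
        rw [lintegral_add_left hsubmeas, lintegral_add_left hg1m, hB1, hB2]
      have hsum1 : ∫⁻ p, (ENNReal.ofReal (‖p.1‖ ^ 2) + ENNReal.ofReal (‖p.2‖ ^ 2)) ∂γ =
          (ENNReal.ofReal ((θ 0) ^ 2) * M 0 + ENNReal.ofReal ((θ 1) ^ 2) * M 1) +
            (ENNReal.ofReal ((θ' 0) ^ 2) * M 0 + ENNReal.ofReal ((θ' 1) ^ 2) * M 1) := by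
        rw [lintegral_add_left hm1, hSx, hSy]
      have hle : (ENNReal.ofReal ((θ 0) ^ 2) * M 0 + ENNReal.ofReal ((θ 1) ^ 2) * M 1) +
            (ENNReal.ofReal ((θ' 0) ^ 2) * M 0 + ENNReal.ofReal ((θ' 1) ^ 2) * M 1)
          ≤ (∫⁻ p, ENNReal.ofReal (‖p.1 - p.2‖ ^ 2) ∂γ) +
            ((ENNReal.ofReal (θ 0 * θ' 0) * M 0 + ENNReal.ofReal (θ 1 * θ' 1) * M 1) +
             (ENNReal.ofReal (θ 0 * θ' 0) * M 0 + ENNReal.ofReal (θ 1 * θ' 1) * M 1)) := by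
        rw [← hsum1, ← hsum2]
        exact lintegral_mono hpt
      have hco : ∀ u v : ℝ, 0 ≤ u → 0 ≤ v →
          ENNReal.ofReal ((u - v) ^ 2) + (ENNReal.ofReal (u * v) + ENNReal.ofReal (u * v)) =
            ENNReal.ofReal (u ^ 2) + ENNReal.ofReal (v ^ 2) := by
        intro u v hu hv
        rw [← ENNReal.ofReal_add (mul_nonneg hu hv) (mul_nonneg hu hv),
          ← ENNReal.ofReal_add (sq_nonneg _) (add_nonneg (mul_nonneg hu hv) (mul_nonneg hu hv)),
          ← ENNReal.ofReal_add (sq_nonneg _) (sq_nonneg _)]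
        congr 1; ring
      have hKB : K + ((ENNReal.ofReal (θ 0 * θ' 0) * M 0 + ENNReal.ofReal (θ 1 * θ' 1) * M 1) +
             (ENNReal.ofReal (θ 0 * θ' 0) * M 0 + ENNReal.ofReal (θ 1 * θ' 1) * M 1)) =
          (ENNReal.ofReal ((θ 0) ^ 2) * M 0 + ENNReal.ofReal ((θ 1) ^ 2) * M 1) +
            (ENNReal.ofReal ((θ' 0) ^ 2) * M 0 + ENNReal.ofReal ((θ' 1) ^ 2) * M 1) := by
        rw [hKdef]
        calc ENNReal.ofReal ((θ 0 - θ' 0) ^ 2) * M 0 + ENNReal.ofReal ((θ 1 - θ' 1) ^ 2) * M 1 +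
            ((ENNReal.ofReal (θ 0 * θ' 0) * M 0 + ENNReal.ofReal (θ 1 * θ' 1) * M 1) +
             (ENNReal.ofReal (θ 0 * θ' 0) * M 0 + ENNReal.ofReal (θ 1 * θ' 1) * M 1))
            = (ENNReal.ofReal ((θ 0 - θ' 0) ^ 2) +
                (ENNReal.ofReal (θ 0 * θ' 0) + ENNReal.ofReal (θ 0 * θ' 0))) * M 0 +
              (ENNReal.ofReal ((θ 1 - θ' 1) ^ 2) +
                (ENNReal.ofReal (θ 1 * θ' 1) + ENNReal.ofReal (θ 1 * θ' 1))) * M 1 := by ring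
          _ = (ENNReal.ofReal ((θ 0) ^ 2) + ENNReal.ofReal ((θ' 0) ^ 2)) * M 0 +
              (ENNReal.ofReal ((θ 1) ^ 2) + ENNReal.ofReal ((θ' 1) ^ 2)) * M 1 := by
              rw [hco _ _ (hθ 0).le (hθ' 0).le, hco _ _ (hθ 1).le (hθ' 1).le]
          _ = _ := by ring
      have hBfin : ((ENNReal.ofReal (θ 0 * θ' 0) * M 0 + ENNReal.ofReal (θ 1 * θ' 1) * M 1) +
             (ENNReal.ofReal (θ 0 * θ' 0) * M 0 + ENNReal.ofReal (θ 1 * θ' 1) * M 1)) ≠ ⊤ :=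
        ENNReal.add_ne_top.2 ⟨ENNReal.add_ne_top.2
            ⟨ENNReal.mul_ne_top ENNReal.ofReal_ne_top hM0fin,
             ENNReal.mul_ne_top ENNReal.ofReal_ne_top hM1fin⟩,
          ENNReal.add_ne_top.2
            ⟨ENNReal.mul_ne_top ENNReal.ofReal_ne_top hM0fin,
             ENNReal.mul_ne_top ENNReal.ofReal_ne_top hM1fin⟩⟩
      exact (ENNReal.add_le_add_iff_right hBfin).mp (by rw [hKB]; exact hle)
  rw [hW, ← ENNReal.rpow_natCast (K ^ (1 / 2 : ℝ)) 2, ← ENNReal.rpow_mul]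
  norm_num
end
end

section
/- Let A = ∏_{i=1}^m [a_{1,i}, a_{2,i}] be a rectangle in ℝ^m with a_{1,i} < a_{2,i} for each i, and let μ₀ be the uniform probability measure on A, i.e., dμ₀ = (1/|A|) 𝟙_A dx where |A| is the Lebesgue measure of A. Let θ, θ' ∈ ℝ^m have strictly positive entries and let μ_θ, μ_{θ'} be the dilations of μ₀ by θ and θ'. Then W₂(μ_θ, μ_{θ'})² = (1/3) Σ_{i=1}^m |θᵢ − θ'ᵢ|² (a_{2,i}² + a_{2,i} a_{1,i} + a_{1,i}²). -/
open MeasureTheory Filter Set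
open scoped ENNReal NNReal

noncomputable section

namespace WassersteinAux

lemma restrict_pi_pi' {m : ℕ} (s : Fin m → Set ℝ) :
    (volume : Measure (Fin m → ℝ)).restrict (Set.pi univ s)
      = Measure.pi (fun i => volume.restrict (s i)) := by
  refine Measure.pi_eq (fun t ht => ?_) |>.symm
  rw [Measure.restrict_apply (MeasurableSet.univ_pi ht), ← Set.pi_inter_distrib, volume_pi_pi]
  simp [Measure.restrict_apply (ht _)]

lemma pi_map_eval {m : ℕ} (ν : Fin m → Measure ℝ) [∀ i, IsFiniteMeasure (ν i)] (i : Fin m) :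
    (Measure.pi ν).map (fun y => y i)
      = (∏ j ∈ Finset.univ.erase i, ν j univ) • ν i := by
  ext s hs
  rw [Measure.map_apply (measurable_pi_apply i) hs]
  have hpre : (fun y : Fin m → ℝ => y i) ⁻¹' s
      = Set.pi univ (Function.update (fun _ => (univ : Set ℝ)) i s) := by
    ext y
    simp only [Set.mem_preimage, Set.mem_pi, Set.mem_univ, forall_true_left]
    constructor
    · intro h j
      rcases eq_or_ne j i with rfl | hj
      · simpa using h
      · simp [Function.update_of_ne hj]
    · intro h; simpa using h i
  rw [hpre, Measure.pi_pi, Measure.smul_apply, smul_eq_mul,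
    ← Finset.mul_prod_erase Finset.univ _ (Finset.mem_univ i)]
  rw [Function.update_self, mul_comm]
  congr 1
  exact Finset.prod_congr rfl fun j hj => by
    rw [Function.update_of_ne (Finset.ne_of_mem_erase hj)]

lemma lintegral_eval_pi {m : ℕ} (ν : Fin m → Measure ℝ) [∀ i, IsFiniteMeasure (ν i)]
    (i : Fin m) (g : ℝ → ℝ≥0∞) (hg : Measurable g) :
    ∫⁻ y : Fin m → ℝ, g (y i) ∂(Measure.pi ν)
      = (∏ j ∈ Finset.univ.erase i, ν j univ) * ∫⁻ t, g t ∂(ν i) := by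
  rw [← lintegral_map hg (measurable_pi_apply i), pi_map_eval, lintegral_smul_measure, smul_eq_mul]

lemma one_dim (a b c : ℝ) (hab : a ≤ b) (hc : 0 ≤ c) :
    ∫⁻ t, ENNReal.ofReal (c * t^2) ∂(volume.restrict (Icc a b))
      = ENNReal.ofReal (c * (b^3 - a^3)/3) := by
  rw [← ofReal_integral_eq_lintegral_ofReal]
  · congr 1
    rw [integral_Icc_eq_integral_Ioc, ← intervalIntegral.integral_of_le hab]
    simp [intervalIntegral.integral_const_mul, integral_pow]
    ring
  · exact (Continuous.integrableOn_Icc (by continuity))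
  · exact Filter.Eventually.of_forall fun t => by positivity

lemma hquad' (u v : ℝ) : 0 ≤ u^2 + u * v + v^2 := by
  nlinarith [sq_nonneg (u + v), sq_nonneg (u - v)]

lemma volA {m : ℕ} (a₁ a₂ : Fin m → ℝ) (ha : ∀ i, a₁ i < a₂ i)
    (A : Set (EuclideanSpace ℝ (Fin m)))
    (hA : A = {x : EuclideanSpace ℝ (Fin m) | ∀ i, x i ∈ Set.Icc (a₁ i) (a₂ i)}) :
    volume A = ENNReal.ofReal (∏ i, (a₂ i - a₁ i)) := by
  have hAe : A = (MeasurableEquiv.toLp 2 (Fin m → ℝ)).symm ⁻¹'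
      (Set.pi univ fun i => Icc (a₁ i) (a₂ i)) := by
    rw [hA]; ext x
    simp only [Set.mem_preimage, Set.mem_pi, Set.mem_univ, forall_true_left,
      Set.mem_setOf_eq]; rfl
  rw [hAe, (EuclideanSpace.volume_preserving_symm_measurableEquiv_toLp (Fin m)).measure_preimage
    (MeasurableSet.univ_pi fun i => measurableSet_Icc).nullMeasurableSet,
    volume_pi_pi]
  simp only [Real.volume_Icc]
  rw [← ENNReal.ofReal_prod_of_nonneg]
  exact fun i _ => sub_nonneg.mpr (ha i).le

/-- The key integral computation against the uniform measure on the rectangle. -/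
lemma unif_lintegral {m : ℕ} (a₁ a₂ : Fin m → ℝ) (ha : ∀ i, a₁ i < a₂ i)
    (A : Set (EuclideanSpace ℝ (Fin m)))
    (hA : A = {x : EuclideanSpace ℝ (Fin m) | ∀ i, x i ∈ Set.Icc (a₁ i) (a₂ i)})
    (b : Fin m → ℝ) (hb : ∀ i, 0 ≤ b i) :
    ∫⁻ x, ENNReal.ofReal (∑ i, b i * (x i)^2)
        ∂((volume A)⁻¹ • volume.restrict A : Measure (EuclideanSpace ℝ (Fin m)))
      = ENNReal.ofReal (∑ i, b i * ((a₂ i)^2 + a₂ i * a₁ i + (a₁ i)^2)/3) := by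
  have hquad : ∀ i, 0 ≤ (a₂ i)^2 + a₂ i * a₁ i + (a₁ i)^2 := fun i => hquad' _ _
  set ℓ : Fin m → ℝ := fun i => a₂ i - a₁ i with hℓ
  have hℓpos : ∀ i, 0 < ℓ i := fun i => sub_pos.mpr (ha i)
  set V : ℝ := ∏ i, ℓ i with hV
  have hVpos : 0 < V := Finset.prod_pos fun i _ => hℓpos i
  have hvolA : volume A = ENNReal.ofReal V := volA a₁ a₂ ha A hA
  have hAe : A = (MeasurableEquiv.toLp 2 (Fin m → ℝ)).symm ⁻¹'
      (Set.pi univ fun i => Icc (a₁ i) (a₂ i)) := by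
    rw [hA]; ext x
    simp only [Set.mem_preimage, Set.mem_pi, Set.mem_univ, forall_true_left,
      Set.mem_setOf_eq]; rfl
  set ν : Fin m → Measure ℝ := fun i => volume.restrict (Icc (a₁ i) (a₂ i)) with hν
  haveI : ∀ i, IsFiniteMeasure (ν i) := fun i => by
    constructor
    rw [hν, Measure.restrict_apply_univ, Real.volume_Icc]
    exact ENNReal.ofReal_lt_top
  have hG : Measurable (fun y : Fin m → ℝ => ENNReal.ofReal (∑ i, b i * (y i)^2)) := by
    fun_prop
  have hmap : (volume.restrict A).map (MeasurableEquiv.toLp 2 (Fin m → ℝ)).symm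
      = Measure.pi ν := by
    rw [hAe, ← Measure.restrict_map (MeasurableEquiv.toLp 2 (Fin m → ℝ)).symm.measurable
      (MeasurableSet.univ_pi fun i => measurableSet_Icc),
      (EuclideanSpace.volume_preserving_symm_measurableEquiv_toLp (Fin m)).map_eq,
      restrict_pi_pi']
  have step1 : ∫⁻ x, ENNReal.ofReal (∑ i, b i * (x i)^2) ∂(volume.restrict A)
      = ∫⁻ y : Fin m → ℝ, ENNReal.ofReal (∑ i, b i * (y i)^2) ∂(Measure.pi ν) := by
    rw [← hmap, lintegral_map hG (MeasurableEquiv.toLp 2 (Fin m → ℝ)).symm.measurable]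
    rfl
  have hνuniv : ∀ j, ν j univ = ENNReal.ofReal (ℓ j) := fun j => by
    rw [hν, Measure.restrict_apply_univ, Real.volume_Icc]
  have step2 : ∫⁻ y : Fin m → ℝ, ENNReal.ofReal (∑ i, b i * (y i)^2) ∂(Measure.pi ν)
      = ENNReal.ofReal (V * ∑ i, b i * ((a₂ i)^2 + a₂ i * a₁ i + (a₁ i)^2)/3) := by
    have hsplit : (fun y : Fin m → ℝ => ENNReal.ofReal (∑ i, b i * (y i)^2))
        = fun y => ∑ i, ENNReal.ofReal (b i * (y i)^2) := by
      funext y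
      rw [ENNReal.ofReal_sum_of_nonneg fun i _ => mul_nonneg (hb i) (sq_nonneg _)]
    rw [hsplit, lintegral_finset_sum _ fun i _ => by fun_prop]
    have hterm : ∀ i, ∫⁻ y : Fin m → ℝ, ENNReal.ofReal (b i * (y i)^2) ∂(Measure.pi ν)
        = ENNReal.ofReal (V * (b i * ((a₂ i)^2 + a₂ i * a₁ i + (a₁ i)^2)/3)) := by
      intro i
      have hg : Measurable fun t : ℝ => ENNReal.ofReal (b i * t^2) := by
        fun_prop
      rw [lintegral_eval_pi ν i (fun t => ENNReal.ofReal (b i * t^2)) hg]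
      rw [hν, one_dim _ _ _ (ha i).le (hb i)]
      have : (∏ j ∈ Finset.univ.erase i, ν j univ)
          = ENNReal.ofReal (∏ j ∈ Finset.univ.erase i, ℓ j) := by
        simp_rw [hνuniv]
        rw [← ENNReal.ofReal_prod_of_nonneg fun j _ => (hℓpos j).le]
      rw [this, ← ENNReal.ofReal_mul (Finset.prod_nonneg fun j _ => (hℓpos j).le)]
      congr 1
      have hVe : V = ℓ i * ∏ j ∈ Finset.univ.erase i, ℓ j :=
        (Finset.mul_prod_erase Finset.univ ℓ (Finset.mem_univ i)).symm
      rw [hVe]; ring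
    rw [Finset.sum_congr rfl fun i _ => hterm i,
      ← ENNReal.ofReal_sum_of_nonneg fun i _ => mul_nonneg hVpos.le
        (div_nonneg (mul_nonneg (hb i) (hquad i)) (by norm_num)), ← Finset.mul_sum]
  rw [lintegral_smul_measure, smul_eq_mul, step1, step2, hvolA,
    ENNReal.ofReal_mul hVpos.le, ← mul_assoc,
    ENNReal.inv_mul_cancel (by simpa using hVpos) ENNReal.ofReal_ne_top, one_mul]

lemma key1 (c x y : ℝ) (hc : 0 < c) : x^2 + y^2 ≤ (x - y)^2 + c*x^2 + c⁻¹*y^2 := by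
  rw [← sub_nonneg]
  have h : (x - y)^2 + c*x^2 + c⁻¹*y^2 - (x^2 + y^2) = (c*x - y)^2 / c := by
    field_simp; ring
  rw [h]; positivity

lemma norm_sq_eq {m : ℕ} (x : EuclideanSpace ℝ (Fin m)) : ‖x‖^2 = ∑ i, (x i)^2 := by
  rw [EuclideanSpace.norm_eq, Real.sq_sqrt (by positivity)]
  simp [sq_abs]

end WassersteinAux

open WassersteinAux


/-- Let `A = ∏ᵢ [a₁ᵢ, a₂ᵢ]` be a rectangle in `ℝ^m` with `a₁ᵢ < a₂ᵢ`, and let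
`μ₀` be the uniform probability measure on `A`. Then for dilations by `θ, θ'` with strictly
positive entries, `W₂(μ_θ, μ_{θ'})² = (1/3) Σᵢ |θᵢ − θ'ᵢ|² (a₂ᵢ² + a₂ᵢ a₁ᵢ + a₁ᵢ²)`. -/
theorem wasserstein_dilation_rectangle {m : ℕ}
    (a₁ a₂ : Fin m → ℝ) (ha : ∀ i, a₁ i < a₂ i)
    (A : Set (EuclideanSpace ℝ (Fin m)))
    (hA : A = {x : EuclideanSpace ℝ (Fin m) | ∀ i, x i ∈ Set.Icc (a₁ i) (a₂ i)})
    (μ₀ : Measure (EuclideanSpace ℝ (Fin m)))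
    (hμ₀ : μ₀ = (volume A)⁻¹ • volume.restrict A)
    (θ θ' : Fin m → ℝ) (hθ : ∀ i, 0 < θ i) (hθ' : ∀ i, 0 < θ' i) :
    (W2 (dilate θ μ₀) (dilate θ' μ₀)) ^ 2 =
      ENNReal.ofReal ((1 / 3) *
        ∑ i, |θ i - θ' i| ^ 2 * ((a₂ i) ^ 2 + a₂ i * a₁ i + (a₁ i) ^ 2)) := by
  classical
  -- abbreviations
  set q : Fin m → ℝ := fun i => (a₂ i)^2 + a₂ i * a₁ i + (a₁ i)^2 with hq
  have hq0 : ∀ i, 0 ≤ q i := fun i => hquad' _ _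
  set Sb : (Fin m → ℝ) → ℝ := fun b => ∑ i, b i * q i / 3 with hSb
  have hSb0 : ∀ b : Fin m → ℝ, (∀ i, 0 ≤ b i) → 0 ≤ Sb b := fun b hb =>
    Finset.sum_nonneg fun i _ => div_nonneg (mul_nonneg (hb i) (hq0 i)) (by norm_num)
  set C : ℝ := Sb (fun i => (θ i - θ' i)^2) with hC
  have hC0 : 0 ≤ C := hSb0 _ fun i => sq_nonneg _
  -- the integral computation, in convenient form
  have hint : ∀ b : Fin m → ℝ, (∀ i, 0 ≤ b i) →
      ∫⁻ x, ENNReal.ofReal (∑ i, b i * (x i)^2) ∂μ₀ = ENNReal.ofReal (Sb b) := by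
    intro b hb
    rw [hμ₀]
    exact unif_lintegral a₁ a₂ ha A hA b hb
  -- probability measure
  have hvolA : volume A = ENNReal.ofReal (∏ i, (a₂ i - a₁ i)) := volA a₁ a₂ ha A hA
  have hVpos : (0:ℝ) < ∏ i, (a₂ i - a₁ i) :=
    Finset.prod_pos fun i _ => sub_pos.mpr (ha i)
  haveI hμprob : IsProbabilityMeasure μ₀ := by
    constructor
    rw [hμ₀, Measure.smul_apply, Measure.restrict_apply_univ, smul_eq_mul, hvolA,
      ENNReal.inv_mul_cancel (by simpa using hVpos) ENNReal.ofReal_ne_top]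
  -- dilation maps
  have hdil : ∀ ϑ : Fin m → ℝ, Measurable (fun x : EuclideanSpace ℝ (Fin m) => WithLp.toLp 2 (fun i => ϑ i * x i)) := by
    intro ϑ
    fun_prop
  -- measurable integrands
  have hcostmeas : Measurable (fun p : EuclideanSpace ℝ (Fin m) × EuclideanSpace ℝ (Fin m) => ENNReal.ofReal (‖p.1 - p.2‖^2)) :=
    (((measurable_fst.sub measurable_snd).norm).pow_const 2).ennreal_ofReal
  have hfmeas : ∀ b : Fin m → ℝ,
      Measurable (fun x : EuclideanSpace ℝ (Fin m) => ENNReal.ofReal (∑ i, b i * (x i)^2)) := fun b => by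
    fun_prop
  -- integrals against the dilated measures
  have hintd : ∀ (ϑ : Fin m → ℝ) (b : Fin m → ℝ), (∀ i, 0 ≤ b i) →
      ∫⁻ x, ENNReal.ofReal (∑ i, b i * (x i)^2) ∂(dilate ϑ μ₀)
        = ENNReal.ofReal (Sb (fun i => b i * (ϑ i)^2)) := by
    intro ϑ b hb
    rw [dilate, lintegral_map (hfmeas b) (hdil ϑ)]
    have : (fun x : EuclideanSpace ℝ (Fin m) => ENNReal.ofReal (∑ i, b i * ((ϑ i * x i))^2))
        = fun x : EuclideanSpace ℝ (Fin m) => ENNReal.ofReal (∑ i, (b i * (ϑ i)^2) * (x i)^2) := by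
      funext x; congr 1; exact Finset.sum_congr rfl fun i _ => by ring
    rw [this, hint _ fun i => mul_nonneg (hb i) (sq_nonneg _)]
  -- value of the candidate coupling
  set T : EuclideanSpace ℝ (Fin m) → EuclideanSpace ℝ (Fin m) × EuclideanSpace ℝ (Fin m) := fun z => (WithLp.toLp 2 (fun i => θ i * z i), WithLp.toLp 2 (fun i => θ' i * z i)) with hT
  have hTmeas : Measurable T := (hdil θ).prodMk (hdil θ')
  set γ₀ : Measure (EuclideanSpace ℝ (Fin m) × EuclideanSpace ℝ (Fin m)) := μ₀.map T with hγ₀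
  haveI : IsProbabilityMeasure γ₀ := Measure.isProbabilityMeasure_map hTmeas.aemeasurable
  have hfst : γ₀.map Prod.fst = dilate θ μ₀ := by
    rw [hγ₀, Measure.map_map measurable_fst hTmeas]; rfl
  have hsnd : γ₀.map Prod.snd = dilate θ' μ₀ := by
    rw [hγ₀, Measure.map_map measurable_snd hTmeas]; rfl
  have hcost₀ : ∫⁻ p, ENNReal.ofReal (‖p.1 - p.2‖^2) ∂γ₀ = ENNReal.ofReal C := by
    rw [hγ₀, lintegral_map hcostmeas hTmeas]
    have : (fun z : EuclideanSpace ℝ (Fin m) => ENNReal.ofReal (‖(T z).1 - (T z).2‖^2))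
        = fun z : EuclideanSpace ℝ (Fin m) => ENNReal.ofReal (∑ i, ((θ i - θ' i)^2) * (z i)^2) := by
      funext z
      congr 1
      rw [norm_sq_eq]
      exact Finset.sum_congr rfl fun i _ => by
        show (θ i * z i - θ' i * z i)^2 = _
        ring
    rw [show (fun z : EuclideanSpace ℝ (Fin m) => ENNReal.ofReal (‖(T z).1 - (T z).2‖ ^ 2)) = _ from this,
      hint _ fun i => sq_nonneg _]
  -- lower bound for arbitrary couplings
  have hlow : ∀ γ : Measure (EuclideanSpace ℝ (Fin m) × EuclideanSpace ℝ (Fin m)), IsProbabilityMeasure γ →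
      γ.map Prod.fst = dilate θ μ₀ → γ.map Prod.snd = dilate θ' μ₀ →
      ENNReal.ofReal C ≤ ∫⁻ p, ENNReal.ofReal (‖p.1 - p.2‖^2) ∂γ := by
    intro γ hγprob h1 h2
    set b1 : Fin m → ℝ := fun _ => 1
    set cθ : Fin m → ℝ := fun i => θ' i / θ i with hcθ
    set cθ' : Fin m → ℝ := fun i => θ i / θ' i with hcθ'
    have hcθ0 : ∀ i, 0 < cθ i := fun i => div_pos (hθ' i) (hθ i)
    have hcθ'0 : ∀ i, 0 < cθ' i := fun i => div_pos (hθ i) (hθ' i)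
    -- marginal integrals
    have hmarg1 : ∀ b : Fin m → ℝ,
        ∫⁻ p : EuclideanSpace ℝ (Fin m) × EuclideanSpace ℝ (Fin m), ENNReal.ofReal (∑ i, b i * (p.1 i)^2) ∂γ
          = ∫⁻ x, ENNReal.ofReal (∑ i, b i * (x i)^2) ∂(dilate θ μ₀) := by
      intro b
      rw [← h1, lintegral_map (hfmeas b) measurable_fst]
    have hmarg2 : ∀ b : Fin m → ℝ,
        ∫⁻ p : EuclideanSpace ℝ (Fin m) × EuclideanSpace ℝ (Fin m), ENNReal.ofReal (∑ i, b i * (p.2 i)^2) ∂γ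
          = ∫⁻ x, ENNReal.ofReal (∑ i, b i * (x i)^2) ∂(dilate θ' μ₀) := by
      intro b
      rw [← h2, lintegral_map (hfmeas b) measurable_snd]
    -- the pointwise inequality, integrated
    have hsum0 : ∀ (c : Fin m → ℝ), (∀ i, 0 ≤ c i) → ∀ x : EuclideanSpace ℝ (Fin m),
        (0:ℝ) ≤ ∑ i, c i * (x i)^2 := fun c hc x =>
      Finset.sum_nonneg fun i _ => mul_nonneg (hc i) (sq_nonneg _)
    have hpoint : ∀ p : EuclideanSpace ℝ (Fin m) × EuclideanSpace ℝ (Fin m),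
        ENNReal.ofReal (∑ i, b1 i * (p.1 i)^2) + ENNReal.ofReal (∑ i, b1 i * (p.2 i)^2)
        ≤ ENNReal.ofReal (‖p.1 - p.2‖^2)
          + (ENNReal.ofReal (∑ i, cθ i * (p.1 i)^2)
             + ENNReal.ofReal (∑ i, cθ' i * (p.2 i)^2)) := by
      intro p
      rw [← ENNReal.ofReal_add (hsum0 cθ (fun i => (hcθ0 i).le) _)
          (hsum0 cθ' (fun i => (hcθ'0 i).le) _),
        ← ENNReal.ofReal_add (sq_nonneg _)
          (add_nonneg (hsum0 cθ (fun i => (hcθ0 i).le) _)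
            (hsum0 cθ' (fun i => (hcθ'0 i).le) _)),
        ← ENNReal.ofReal_add (hsum0 b1 (fun i => zero_le_one) _)
          (hsum0 b1 (fun i => zero_le_one) _)]
      apply ENNReal.ofReal_le_ofReal
      have hterm : ∀ i : Fin m, b1 i * (p.1 i)^2 + b1 i * (p.2 i)^2
          ≤ ((p.1 - p.2) i)^2 + (cθ i * (p.1 i)^2 + cθ' i * (p.2 i)^2) := by
        intro i
        have hxy : (p.1 - p.2) i = p.1 i - p.2 i := rfl
        have hk := key1 (cθ i) (p.1 i) (p.2 i) (hcθ0 i)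
        have hinv : (cθ i)⁻¹ = cθ' i := by
          rw [hcθ, hcθ']; rw [inv_div]
        rw [hinv] at hk
        simpa [b1, hxy, add_assoc] using hk
      calc (∑ i, b1 i * (p.1 i)^2) + ∑ i, b1 i * (p.2 i)^2
          = ∑ i, (b1 i * (p.1 i)^2 + b1 i * (p.2 i)^2) := Finset.sum_add_distrib.symm
        _ ≤ ∑ i, (((p.1 - p.2) i)^2 + (cθ i * (p.1 i)^2 + cθ' i * (p.2 i)^2)) :=
            Finset.sum_le_sum fun i _ => hterm i
        _ = ‖p.1 - p.2‖^2 + ((∑ i, cθ i * (p.1 i)^2) + ∑ i, cθ' i * (p.2 i)^2) := by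
            rw [Finset.sum_add_distrib, Finset.sum_add_distrib, norm_sq_eq]
    have hineq : ∫⁻ p : EuclideanSpace ℝ (Fin m) × EuclideanSpace ℝ (Fin m), ENNReal.ofReal (∑ i, b1 i * (p.1 i)^2) ∂γ
          + ∫⁻ p : EuclideanSpace ℝ (Fin m) × EuclideanSpace ℝ (Fin m), ENNReal.ofReal (∑ i, b1 i * (p.2 i)^2) ∂γ
        ≤ ∫⁻ p, ENNReal.ofReal (‖p.1 - p.2‖^2) ∂γ
          + (∫⁻ p : EuclideanSpace ℝ (Fin m) × EuclideanSpace ℝ (Fin m), ENNReal.ofReal (∑ i, cθ i * (p.1 i)^2) ∂γ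
             + ∫⁻ p : EuclideanSpace ℝ (Fin m) × EuclideanSpace ℝ (Fin m), ENNReal.ofReal (∑ i, cθ' i * (p.2 i)^2) ∂γ) := by
      have hm1 : Measurable fun p : EuclideanSpace ℝ (Fin m) × EuclideanSpace ℝ (Fin m) =>
          ENNReal.ofReal (∑ i, b1 i * (p.1 i)^2) := (hfmeas b1).comp measurable_fst
      have hmc : Measurable fun p : EuclideanSpace ℝ (Fin m) × EuclideanSpace ℝ (Fin m) =>
          ENNReal.ofReal (∑ i, cθ i * (p.1 i)^2) := (hfmeas cθ).comp measurable_fst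
      have h := lintegral_mono hpoint (μ := γ)
      rwa [lintegral_add_left hm1, lintegral_add_left hcostmeas,
        lintegral_add_left hmc] at h
    -- compute the four known integrals
    rw [hmarg1, hmarg2, hmarg1, hmarg2,
      hintd θ b1 (fun i => zero_le_one), hintd θ' b1 (fun i => zero_le_one),
      hintd θ cθ (fun i => (hcθ0 i).le), hintd θ' cθ' (fun i => (hcθ'0 i).le)] at hineq
    rw [← ENNReal.ofReal_add
        (hSb0 _ fun i => mul_nonneg zero_le_one (sq_nonneg _))
        (hSb0 _ fun i => mul_nonneg zero_le_one (sq_nonneg _)),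
      ← ENNReal.ofReal_add
        (hSb0 _ fun i => mul_nonneg (hcθ0 i).le (sq_nonneg _))
        (hSb0 _ fun i => mul_nonneg (hcθ'0 i).le (sq_nonneg _))] at hineq
    set Pr : ℝ := Sb (fun i => b1 i * θ i ^ 2) + Sb (fun i => b1 i * θ' i ^ 2) with hPr
    set Rr : ℝ := Sb (fun i => cθ i * θ i ^ 2) + Sb (fun i => cθ' i * θ' i ^ 2) with hRr
    have hRr0 : 0 ≤ Rr := add_nonneg
      (hSb0 _ fun i => mul_nonneg (hcθ0 i).le (sq_nonneg _))
      (hSb0 _ fun i => mul_nonneg (hcθ'0 i).le (sq_nonneg _))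
    have hCeq : C = Pr - Rr := by
      rw [hC, hPr, hRr, hSb]
      simp only
      rw [← Finset.sum_add_distrib, ← Finset.sum_add_distrib, ← Finset.sum_sub_distrib]
      refine Finset.sum_congr rfl fun i _ => ?_
      have h1 : cθ i * θ i ^ 2 = θ' i * θ i := by
        rw [hcθ]; field_simp [(hθ i).ne']
      have h2 : cθ' i * θ' i ^ 2 = θ i * θ' i := by
        rw [hcθ']; field_simp [(hθ' i).ne']
      rw [h1, h2]
      simp only [b1]
      ring
    rw [hCeq, ENNReal.ofReal_sub _ hRr0, tsub_le_iff_right]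
    exact hineq
  -- conclusion
  have hW : W2 (dilate θ μ₀) (dilate θ' μ₀) = ENNReal.ofReal C ^ (1/2 : ℝ) := by
    apply le_antisymm
    · rw [W2]
      refine iInf_le_of_le γ₀ ?_
      rw [iInf_pos ‹IsProbabilityMeasure γ₀›, iInf_pos hfst, iInf_pos hsnd, hcost₀]
    · rw [W2]
      exact le_iInf fun γ => le_iInf fun hp => le_iInf fun h1 => le_iInf fun h2 =>
        ENNReal.rpow_le_rpow (hlow γ hp h1 h2) (by norm_num)
  rw [hW, ← ENNReal.rpow_natCast _ 2, ← ENNReal.rpow_mul]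
  norm_num
  rw [← ENNReal.ofReal_mul (by norm_num)]
  congr 1
  simp only [hC, hSb, hq]
  rw [Finset.mul_sum]
  exact Finset.sum_congr rfl fun i _ => by ring
end
end

section
/- Fix θ, θ' and suppose T_θ, T_{θ'} : ℝ^m → ℝ^m are Lipschitz maps. Suppose there is a constant c ≥ 0 such that W₂((T_θ)♯μ₀, (T_{θ'})♯μ₀) = c for every absolutely continuous μ₀ ∈ 𝕎₂(ℝ^m). Then for every (not necessarily absolutely continuous) ν₀ ∈ 𝕎₂(ℝ^m), W₂((T_θ)♯ν₀, (T_{θ'})♯ν₀) = c. -/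
open MeasureTheory Filter Set
open scoped ENNReal NNReal
open ProbabilityTheory

noncomputable section

namespace W2Aux
variable {m : ℕ}
abbrev E (m : ℕ) := EuclideanSpace ℝ (Fin m)
def cost (γ : Measure (E m × E m)) : ℝ≥0∞ := ∫⁻ p, ENNReal.ofReal (‖p.1 - p.2‖ ^ 2) ∂γ

lemma glue (γ₁ γ₂ : Measure (E m × E m)) [IsProbabilityMeasure γ₁] [IsProbabilityMeasure γ₂]
    (hmid : γ₁.map Prod.snd = γ₂.map Prod.fst) :
    ∃ γ₃ : Measure (E m × E m), IsProbabilityMeasure γ₃ ∧ γ₃.map Prod.fst = γ₁.map Prod.fst ∧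
      γ₃.map Prod.snd = γ₂.map Prod.snd ∧
      cost γ₃ ^ (1/2:ℝ) ≤ cost γ₁ ^ (1/2:ℝ) + cost γ₂ ^ (1/2:ℝ) := by
  classical
  set κ : Kernel (E m) (E m) := γ₂.condKernel with hκ
  set κ' : Kernel (E m × E m) (E m) := κ.comap Prod.snd measurable_snd with hκ'
  set θ : Measure ((E m × E m) × E m) := γ₁ ⊗ₘ κ' with hθ
  haveI : IsProbabilityMeasure θ := by rw [hθ]; infer_instance
  -- marginal 1 : (a,b)
  have hm1 : θ.map (fun p => p.1) = γ₁ := Measure.fst_compProd γ₁ κ'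
  -- marginal 2 : (b,c)
  have hm2 : θ.map (fun p : (E m × E m) × E m => (p.1.2, p.2)) = γ₂ := by
    have hdis : γ₂.fst ⊗ₘ γ₂.condKernel = γ₂ := γ₂.disintegrate γ₂.condKernel
    rw [← hdis]
    ext s hs
    rw [Measure.map_apply (by fun_prop) hs, Measure.compProd_apply hs,
      Measure.compProd_apply (hs.preimage (by fun_prop))]
    have : ∀ ab : E m × E m,
        κ' ab (Prod.mk ab ⁻¹' ((fun p : (E m × E m) × E m => (p.1.2, p.2)) ⁻¹' s))
          = κ ab.2 (Prod.mk ab.2 ⁻¹' s) := by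
      intro ab; rfl
    simp_rw [this]
    rw [show (fun b => γ₂.condKernel b (Prod.mk b ⁻¹' s)) = fun b => κ b (Prod.mk b ⁻¹' s) from rfl]
    rw [Measure.fst, ← hmid,
      lintegral_map (Kernel.measurable_kernel_prodMk_left hs) measurable_snd]
  -- the glued coupling
  refine ⟨θ.map (fun p => (p.1.1, p.2)), Measure.isProbabilityMeasure_map (by fun_prop), ?_, ?_, ?_⟩
  · rw [Measure.map_map measurable_fst (by fun_prop), ← hm1,
      Measure.map_map measurable_fst (by fun_prop)]
    rfl
  · rw [Measure.map_map measurable_snd (by fun_prop), ← hm2,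
      Measure.map_map measurable_snd (by fun_prop)]
    rfl
  · -- cost bound via Minkowski
    set F : ((E m × E m) × E m) → ℝ≥0∞ := fun p => ENNReal.ofReal ‖p.1.1 - p.1.2‖ with hF
    set G : ((E m × E m) × E m) → ℝ≥0∞ := fun p => ENNReal.ofReal ‖p.1.2 - p.2‖ with hG
    have hFm : AEMeasurable F θ := by fun_prop
    have hGm : AEMeasurable G θ := by fun_prop
    have key : ∀ x : ℝ≥0∞, x ^ (2:ℝ) = x ^ (2:ℕ) := fun x => by
      rw [← ENNReal.rpow_natCast]; norm_num
    have hint1 : ∫⁻ p, F p ^ (2:ℝ) ∂θ = cost γ₁ := by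
      simp_rw [key, hF, ← ENNReal.ofReal_pow (norm_nonneg _)]
      rw [cost, ← hm1, lintegral_map (by fun_prop) (by fun_prop)]
    have hint2 : ∫⁻ p, G p ^ (2:ℝ) ∂θ = cost γ₂ := by
      simp_rw [key, hG, ← ENNReal.ofReal_pow (norm_nonneg _)]
      rw [cost, ← hm2, lintegral_map (by fun_prop) (by fun_prop)]
    have hle : cost (θ.map (fun p => (p.1.1, p.2))) ^ (1/2:ℝ)
        ≤ (∫⁻ p, ((F + G) p) ^ (2:ℝ) ∂θ) ^ (1/2:ℝ) := by
      apply ENNReal.rpow_le_rpow _ (by norm_num)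
      rw [cost, lintegral_map (by fun_prop) (by fun_prop)]
      apply lintegral_mono
      intro p
      have h1 : ‖p.1.1 - p.2‖ ≤ ‖p.1.1 - p.1.2‖ + ‖p.1.2 - p.2‖ := by
        have := norm_sub_le (p.1.1 - p.1.2) (p.2 - p.1.2)
        simpa [sub_sub_sub_cancel_right, norm_sub_rev] using this
      show ENNReal.ofReal (‖p.1.1 - p.2‖ ^ 2) ≤ ((F + G) p) ^ (2:ℝ)
      rw [key]
      calc ENNReal.ofReal (‖p.1.1 - p.2‖^2)
          = ENNReal.ofReal ‖p.1.1 - p.2‖ ^ (2:ℕ) := by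
            rw [ENNReal.ofReal_pow (norm_nonneg _)]
        _ ≤ ((F + G) p) ^ (2:ℕ) := by
            gcongr
            simp only [hF, hG, Pi.add_apply]
            rw [← ENNReal.ofReal_add (norm_nonneg _) (norm_nonneg _)]
            exact ENNReal.ofReal_le_ofReal h1
    have hmink := ENNReal.lintegral_Lp_add_le (p := 2) (μ := θ) hFm hGm (by norm_num)
    calc cost (θ.map (fun p => (p.1.1, p.2))) ^ (1/2:ℝ)
        ≤ (∫⁻ p, ((F + G) p) ^ (2:ℝ) ∂θ) ^ (1/2:ℝ) := hle
      _ ≤ (∫⁻ p, F p ^ (2:ℝ) ∂θ) ^ (1/2:ℝ) + (∫⁻ p, G p ^ (2:ℝ) ∂θ) ^ (1/2:ℝ) := by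
          convert hmink using 2 <;> norm_num
      _ = cost γ₁ ^ (1/2:ℝ) + cost γ₂ ^ (1/2:ℝ) := by rw [hint1, hint2]


lemma W2_le_coupling' {μ ν : Measure (E m)} (γ : Measure (E m × E m))
    (hγ : IsProbabilityMeasure γ) (h1 : γ.map Prod.fst = μ) (h2 : γ.map Prod.snd = ν) :
    W2 μ ν ≤ cost γ ^ (1 / 2 : ℝ) :=
  iInf_le_of_le γ (iInf_le_of_le hγ (iInf_le_of_le h1 (iInf_le_of_le h2 le_rfl)))

lemma exists_coupling_lt {μ ν : Measure (E m)} {b : ℝ≥0∞} (h : W2 μ ν < b) :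
    ∃ γ : Measure (E m × E m), IsProbabilityMeasure γ ∧ γ.map Prod.fst = μ ∧
      γ.map Prod.snd = ν ∧ cost γ ^ (1 / 2 : ℝ) < b := by
  unfold W2 at h
  simp only [iInf_lt_iff] at h
  obtain ⟨γ, hγ, h1, h2, hlt⟩ := h
  exact ⟨γ, hγ, h1, h2, hlt⟩

lemma W2_triangle (μ ρ ν : Measure (E m)) :
    W2 μ ν ≤ W2 μ ρ + W2 ρ ν := by
  by_cases h1 : W2 μ ρ = ⊤
  · simp [h1]
  by_cases h2 : W2 ρ ν = ⊤
  · simp [h2]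
  refine ENNReal.le_of_forall_pos_le_add fun ε hε _ => ?_
  have hε2 : ((ε : ℝ≥0∞) / 2) ≠ 0 := by
    simp [ENNReal.div_eq_zero_iff, hε.ne']
  obtain ⟨γ₁, hγ₁, hγ₁f, hγ₁s, hγ₁c⟩ := exists_coupling_lt
    (ENNReal.lt_add_right h1 hε2)
  obtain ⟨γ₂, hγ₂, hγ₂f, hγ₂s, hγ₂c⟩ := exists_coupling_lt
    (ENNReal.lt_add_right h2 hε2)
  haveI := hγ₁; haveI := hγ₂
  obtain ⟨γ₃, hγ₃, hγ₃f, hγ₃s, hγ₃c⟩ := glue γ₁ γ₂ (by rw [hγ₁s, hγ₂f])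
  calc W2 μ ν ≤ cost γ₃ ^ (1/2:ℝ) :=
        W2_le_coupling' γ₃ hγ₃ (by rw [hγ₃f, hγ₁f]) (by rw [hγ₃s, hγ₂s])
    _ ≤ cost γ₁ ^ (1/2:ℝ) + cost γ₂ ^ (1/2:ℝ) := hγ₃c
    _ ≤ (W2 μ ρ + ε/2) + (W2 ρ ν + ε/2) := add_le_add hγ₁c.le hγ₂c.le
    _ = W2 μ ρ + W2 ρ ν + ε := by
        rw [add_add_add_comm, ENNReal.add_halves]

lemma W2_symm_le (μ ν : Measure (E m)) : W2 ν μ ≤ W2 μ ν := by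
  refine le_iInf fun γ => le_iInf fun hγ => le_iInf fun h1 => le_iInf fun h2 => ?_
  haveI := hγ
  have hswap : Measurable (Prod.swap : E m × E m → E m × E m) := measurable_swap
  refine le_trans (W2_le_coupling' (γ.map Prod.swap)
    (Measure.isProbabilityMeasure_map hswap.aemeasurable) ?_ ?_) ?_
  · rw [Measure.map_map measurable_fst hswap]; exact h2
  · rw [Measure.map_map measurable_snd hswap]; exact h1
  · apply le_of_eq
    congr 1
    simp only [cost]
    rw [lintegral_map (by fun_prop) hswap]
    simp [norm_sub_rev]

lemma W2_symm (μ ν : Measure (E m)) : W2 μ ν = W2 ν μ :=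
  le_antisymm (W2_symm_le ν μ) (W2_symm_le μ ν)

lemma W2_map_le {L : ℝ≥0} (hL : L ≠ 0) {T : E m → E m} (hT : LipschitzWith L T)
    (μ ν : Measure (E m)) :
    W2 (μ.map T) (ν.map T) ≤ (L : ℝ≥0∞) * W2 μ ν := by
  have hTm : Measurable T := hT.continuous.measurable
  by_cases hW : W2 μ ν = ⊤
  · rw [hW, ENNReal.mul_top (by exact_mod_cast hL)]; exact le_top
  refine ENNReal.le_of_forall_pos_le_add fun ε hε _ => ?_
  have hδ : ((ε : ℝ≥0∞) / L) ≠ 0 := by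
    simp [ENNReal.div_eq_zero_iff, hε.ne']
  obtain ⟨γ, hγ, h1, h2, hc⟩ := exists_coupling_lt
    (ENNReal.lt_add_right hW hδ)
  haveI := hγ
  have hcost : cost (γ.map (Prod.map T T)) ≤ (L : ℝ≥0∞)^2 * cost γ := by
    simp only [cost]
    rw [lintegral_map (by fun_prop) (hTm.prodMap hTm), ← lintegral_const_mul _ (by fun_prop)]
    apply lintegral_mono
    intro p
    have hb : ‖T p.1 - T p.2‖ ≤ (L : ℝ) * ‖p.1 - p.2‖ := by
      have := hT.dist_le_mul p.1 p.2
      simpa [dist_eq_norm] using this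
    calc ENNReal.ofReal (‖T p.1 - T p.2‖ ^ 2)
        ≤ ENNReal.ofReal (((L:ℝ) * ‖p.1 - p.2‖) ^ 2) := by
          apply ENNReal.ofReal_le_ofReal
          exact pow_le_pow_left₀ (norm_nonneg _) hb 2
      _ = (L : ℝ≥0∞)^2 * ENNReal.ofReal (‖p.1 - p.2‖ ^ 2) := by
          rw [mul_pow, ENNReal.ofReal_mul (by positivity), ENNReal.ofReal_pow L.coe_nonneg,
            ENNReal.ofReal_coe_nnreal]
  calc W2 (μ.map T) (ν.map T)
      ≤ cost (γ.map (Prod.map T T)) ^ (1/2:ℝ) := by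
        refine W2_le_coupling' _ (Measure.isProbabilityMeasure_map ((hTm.prodMap hTm).aemeasurable)) ?_ ?_
        · rw [Measure.map_map measurable_fst (hTm.prodMap hTm), show (Prod.fst ∘ Prod.map T T)
            = T ∘ Prod.fst from rfl, ← Measure.map_map hTm measurable_fst, h1]
        · rw [Measure.map_map measurable_snd (hTm.prodMap hTm), show (Prod.snd ∘ Prod.map T T)
            = T ∘ Prod.snd from rfl, ← Measure.map_map hTm measurable_snd, h2]
    _ ≤ ((L : ℝ≥0∞)^2 * cost γ) ^ (1/2:ℝ) := ENNReal.rpow_le_rpow hcost (by norm_num)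
    _ = (L : ℝ≥0∞) * cost γ ^ (1/2:ℝ) := by
        rw [ENNReal.mul_rpow_of_nonneg _ _ (by norm_num)]
        congr 1
        rw [← ENNReal.rpow_natCast ((L:ℝ≥0∞)) 2, ← ENNReal.rpow_mul]
        norm_num
    _ ≤ (L : ℝ≥0∞) * (W2 μ ν + ε / L) := mul_le_mul_right hc.le _
    _ = (L : ℝ≥0∞) * W2 μ ν + ε := by
        rw [mul_add, ENNReal.mul_div_cancel (by exact_mod_cast hL) (by simp)]

lemma exists_smoothing (ν₀ : Measure (E m)) [IsProbabilityMeasure ν₀]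
    (hfin : FiniteSecondMoment ν₀) {ε : ℝ} (hε : 0 < ε) :
    ∃ μ' : Measure (E m), IsProbabilityMeasure μ' ∧ μ' ≪ volume ∧ FiniteSecondMoment μ' ∧
      W2 ν₀ μ' ≤ ENNReal.ofReal ε := by
  classical
  set B : Set (E m) := Metric.closedBall 0 ε with hB
  have hv0 : 0 < volume B := Metric.measure_closedBall_pos volume (0 : E m) hε
  have hvt : volume B < ⊤ := measure_closedBall_lt_top
  set ρ : Measure (E m) := (volume B)⁻¹ • volume.restrict B with hρ
  have hρuniv : ρ univ = 1 := by
    rw [hρ]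
    simp only [Measure.smul_apply, Measure.restrict_apply MeasurableSet.univ, univ_inter,
      smul_eq_mul]
    exact ENNReal.inv_mul_cancel hv0.ne' hvt.ne
  haveI hρprob : IsProbabilityMeasure ρ := ⟨hρuniv⟩
  have hρac : ρ ≪ (volume : Measure (E m)) := by
    refine Measure.AbsolutelyContinuous.mk fun s hs h0 => ?_
    rw [hρ]
    simp only [Measure.smul_apply, Measure.restrict_apply hs, smul_eq_mul]
    have : volume (s ∩ B) = 0 := measure_mono_null inter_subset_left h0
    rw [this, mul_zero]
  have hρmom : ∫⁻ y, ENNReal.ofReal (‖y‖ ^ 2) ∂ρ ≤ ENNReal.ofReal (ε ^ 2) := by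
    rw [hρ, lintegral_smul_measure]
    calc (volume B)⁻¹ * ∫⁻ y in B, ENNReal.ofReal (‖y‖ ^ 2) ∂volume
        ≤ (volume B)⁻¹ * ∫⁻ _ in B, ENNReal.ofReal (ε ^ 2) ∂volume := by
          refine mul_le_mul_right ?_ _
          refine setLIntegral_mono measurable_const fun y hy => ENNReal.ofReal_le_ofReal ?_
          have hy' : ‖y‖ ≤ ε := by simpa [hB] using hy
          exact pow_le_pow_left₀ (norm_nonneg _) hy' 2
      _ = (volume B)⁻¹ * (ENNReal.ofReal (ε ^ 2) * volume B) := by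
          rw [setLIntegral_const]
      _ ≤ ENNReal.ofReal (ε ^ 2) := by
          rw [mul_comm (ENNReal.ofReal _) _, ← mul_assoc,
            ENNReal.inv_mul_cancel hv0.ne' hvt.ne, one_mul]
  -- the smoothed measure
  set μ' : Measure (E m) := (ν₀.prod ρ).map (fun p => p.1 + p.2) with hμ'
  haveI : IsProbabilityMeasure μ' := Measure.isProbabilityMeasure_map (by fun_prop)
  refine ⟨μ', inferInstance, ?_, ?_, ?_⟩
  · -- absolutely continuous
    refine Measure.AbsolutelyContinuous.mk fun s hs h0 => ?_
    rw [hμ', Measure.map_apply (by fun_prop) hs,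
      Measure.prod_apply (hs.preimage (by fun_prop))]
    have : ∀ x : E m, ρ (Prod.mk x ⁻¹' ((fun p : E m × E m => p.1 + p.2) ⁻¹' s)) = 0 := by
      intro x
      apply hρac
      have : (Prod.mk x ⁻¹' ((fun p : E m × E m => p.1 + p.2) ⁻¹' s)) = (fun y => x + y) ⁻¹' s :=
        rfl
      rw [this, measure_preimage_add volume x s, h0]
    simp [this]
  · -- finite second moment
    unfold FiniteSecondMoment
    rw [hμ', lintegral_map (by fun_prop) (by fun_prop)]
    have hbd : ∀ p : E m × E m, ENNReal.ofReal (‖p.1 + p.2‖ ^ 2)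
        ≤ 2 * ENNReal.ofReal (‖p.1‖ ^ 2) + 2 * ENNReal.ofReal (‖p.2‖ ^ 2) := by
      intro p
      have h1 : ‖p.1 + p.2‖ ^ 2 ≤ 2 * ‖p.1‖ ^ 2 + 2 * ‖p.2‖ ^ 2 := by
        have := norm_add_le p.1 p.2
        nlinarith [norm_nonneg p.1, norm_nonneg p.2, norm_nonneg (p.1 + p.2),
          sq_nonneg (‖p.1‖ - ‖p.2‖)]
      calc ENNReal.ofReal (‖p.1 + p.2‖ ^ 2)
          ≤ ENNReal.ofReal (2 * ‖p.1‖ ^ 2 + 2 * ‖p.2‖ ^ 2) := ENNReal.ofReal_le_ofReal h1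
        _ ≤ 2 * ENNReal.ofReal (‖p.1‖ ^ 2) + 2 * ENNReal.ofReal (‖p.2‖ ^ 2) := by
            rw [ENNReal.ofReal_add (by positivity) (by positivity)]
            gcongr <;> rw [ENNReal.ofReal_mul (by norm_num)] <;> simp [ENNReal.ofReal_ofNat]
    have hint : ∫⁻ p : E m × E m, (2 * ENNReal.ofReal (‖p.1‖ ^ 2)
        + 2 * ENNReal.ofReal (‖p.2‖ ^ 2)) ∂(ν₀.prod ρ) ≠ ⊤ := by
      rw [lintegral_add_left (by fun_prop), lintegral_const_mul _ (by fun_prop),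
        lintegral_const_mul _ (by fun_prop)]
      have e1 : ∫⁻ p : E m × E m, ENNReal.ofReal (‖p.1‖ ^ 2) ∂(ν₀.prod ρ)
          = ∫⁻ x, ENNReal.ofReal (‖x‖ ^ 2) ∂ν₀ := by
        have := lintegral_map (μ := ν₀.prod ρ) (g := Prod.fst)
          (f := fun x : E m => ENNReal.ofReal (‖x‖ ^ 2)) (by fun_prop) measurable_fst
        rw [Measure.map_fst_prod, hρuniv, one_smul] at this
        exact this.symm
      have e2 : ∫⁻ p : E m × E m, ENNReal.ofReal (‖p.2‖ ^ 2) ∂(ν₀.prod ρ)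
          = ∫⁻ y, ENNReal.ofReal (‖y‖ ^ 2) ∂ρ := by
        have := lintegral_map (μ := ν₀.prod ρ) (g := Prod.snd)
          (f := fun x : E m => ENNReal.ofReal (‖x‖ ^ 2)) (by fun_prop) measurable_snd
        rw [Measure.map_snd_prod, measure_univ, one_smul] at this
        exact this.symm
      rw [e1, e2]
      have h2 : ∫⁻ y, ENNReal.ofReal (‖y‖ ^ 2) ∂ρ ≠ ⊤ :=
        (lt_of_le_of_lt hρmom ENNReal.ofReal_lt_top).ne
      exact ENNReal.add_ne_top.mpr ⟨ENNReal.mul_ne_top (by simp) hfin,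
        ENNReal.mul_ne_top (by simp) h2⟩
    exact (lt_of_le_of_lt (lintegral_mono hbd) (lt_top_iff_ne_top.mpr hint)).ne
  · -- W2 close
    set γ : Measure (E m × E m) := (ν₀.prod ρ).map (fun p : E m × E m => (p.1, p.1 + p.2))
      with hγdef
    have hγ : IsProbabilityMeasure γ := Measure.isProbabilityMeasure_map (by fun_prop)
    have h1 : γ.map Prod.fst = ν₀ := by
      rw [hγdef, Measure.map_map measurable_fst (by fun_prop)]
      have : (Prod.fst ∘ fun p : E m × E m => (p.1, p.1 + p.2)) = Prod.fst := rfl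
      rw [this, Measure.map_fst_prod, hρuniv, one_smul]
    have h2 : γ.map Prod.snd = μ' := by
      rw [hγdef, Measure.map_map measurable_snd (by fun_prop), hμ']
      rfl
    have hcost : cost γ ≤ ENNReal.ofReal (ε ^ 2) := by
      rw [cost, hγdef, lintegral_map (by fun_prop) (by fun_prop)]
      have : ∀ p : E m × E m, ENNReal.ofReal (‖(p.1, p.1 + p.2).1 - (p.1, p.1 + p.2).2‖ ^ 2)
          = ENNReal.ofReal (‖p.2‖ ^ 2) := by
        intro p
        congr 2
        rw [show (p.1, p.1 + p.2).1 - (p.1, p.1 + p.2).2 = -p.2 by simp]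
        simp
      simp_rw [this]
      have e2 := lintegral_map (μ := ν₀.prod ρ) (g := Prod.snd)
        (f := fun x : E m => ENNReal.ofReal (‖x‖ ^ 2)) (by fun_prop) measurable_snd
      rw [Measure.map_snd_prod, measure_univ, one_smul] at e2
      rw [← e2]
      exact hρmom
    calc W2 ν₀ μ' ≤ cost γ ^ (1/2:ℝ) := W2_le_coupling' γ hγ h1 h2
      _ ≤ ENNReal.ofReal (ε ^ 2) ^ (1/2:ℝ) := ENNReal.rpow_le_rpow hcost (by norm_num)
      _ = ENNReal.ofReal ε := by
          have h2 : (ε ^ 2 : ℝ) = ε ^ (2:ℝ) := by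
            rw [← Real.rpow_natCast ε 2]; norm_num
          rw [h2, ← ENNReal.ofReal_rpow_of_pos hε, ← ENNReal.rpow_mul]
          norm_num
end W2Aux


/-- Fix Lipschitz maps `T_θ, T_{θ'}` and suppose there is a constant `c ≥ 0`
such that `W₂((T_θ)♯μ₀, (T_{θ'})♯μ₀) = c` for every absolutely continuous
`μ₀ ∈ 𝕎₂(ℝ^m)`. Then `W₂((T_θ)♯ν₀, (T_{θ'})♯ν₀) = c` for every `ν₀ ∈ 𝕎₂(ℝ^m)`. -/
theorem wasserstein_transfer_ac_to_general {m : ℕ}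
    (L : ℝ≥0) (Tθ Tθ' : EuclideanSpace ℝ (Fin m) → EuclideanSpace ℝ (Fin m))
    (hTθ : LipschitzWith L Tθ) (hTθ' : LipschitzWith L Tθ')
    (c : ℝ) (hc : 0 ≤ c)
    (h : ∀ μ₀ : Measure (EuclideanSpace ℝ (Fin m)), IsProbabilityMeasure μ₀ →
      μ₀ ≪ volume → FiniteSecondMoment μ₀ →
      W2 (μ₀.map Tθ) (μ₀.map Tθ') = ENNReal.ofReal c) :
    ∀ ν₀ : Measure (EuclideanSpace ℝ (Fin m)), IsProbabilityMeasure ν₀ →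
      FiniteSecondMoment ν₀ →
      W2 (ν₀.map Tθ) (ν₀.map Tθ') = ENNReal.ofReal c := by
  intro ν₀ hν₀ hfin
  haveI := hν₀
  set L' : ℝ≥0 := L + 1 with hL'def
  have hL'0 : L' ≠ 0 := by simp [hL'def]
  have hTθL : LipschitzWith L' Tθ := hTθ.weaken (by simp [hL'def])
  have hTθ'L : LipschitzWith L' Tθ' := hTθ'.weaken (by simp [hL'def])
  have main : ∀ ε : ℝ≥0, 0 < ε →
      W2 (ν₀.map Tθ) (ν₀.map Tθ') ≤ ENNReal.ofReal c + 2 * (L' : ℝ≥0∞) * (ε : ℝ≥0∞) ∧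
      ENNReal.ofReal c ≤ W2 (ν₀.map Tθ) (ν₀.map Tθ') + 2 * (L' : ℝ≥0∞) * (ε : ℝ≥0∞) := by
    intro ε hε
    obtain ⟨μ', hμ'p, hμ'ac, hμ'fin, hμ'close⟩ := W2Aux.exists_smoothing ν₀ hfin
      (ε := (ε : ℝ)) (by exact_mod_cast hε)
    haveI := hμ'p
    have hc' : W2 (μ'.map Tθ) (μ'.map Tθ') = ENNReal.ofReal c := h μ' hμ'p hμ'ac hμ'fin
    have hclose : W2 ν₀ μ' ≤ (ε : ℝ≥0∞) := by
      calc W2 ν₀ μ' ≤ ENNReal.ofReal (ε : ℝ) := hμ'close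
        _ = (ε : ℝ≥0∞) := ENNReal.ofReal_coe_nnreal
    have hA : W2 (ν₀.map Tθ) (μ'.map Tθ) ≤ (L' : ℝ≥0∞) * ε :=
      le_trans (W2Aux.W2_map_le hL'0 hTθL ν₀ μ') (mul_le_mul_right hclose _)
    have hB : W2 (ν₀.map Tθ') (μ'.map Tθ') ≤ (L' : ℝ≥0∞) * ε :=
      le_trans (W2Aux.W2_map_le hL'0 hTθ'L ν₀ μ') (mul_le_mul_right hclose _)
    constructor
    · calc W2 (ν₀.map Tθ) (ν₀.map Tθ')
          ≤ W2 (ν₀.map Tθ) (μ'.map Tθ) +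
            (W2 (μ'.map Tθ) (μ'.map Tθ') + W2 (μ'.map Tθ') (ν₀.map Tθ')) :=
            le_trans (W2Aux.W2_triangle _ (μ'.map Tθ) _)
              (add_le_add_right (W2Aux.W2_triangle _ (μ'.map Tθ') _) _)
        _ ≤ (L' : ℝ≥0∞) * ε + (ENNReal.ofReal c + (L' : ℝ≥0∞) * ε) := by
            refine add_le_add hA (add_le_add hc'.le ?_)
            rw [W2Aux.W2_symm]
            exact hB
        _ = ENNReal.ofReal c + 2 * (L' : ℝ≥0∞) * (ε : ℝ≥0∞) := by ring
    · calc ENNReal.ofReal c = W2 (μ'.map Tθ) (μ'.map Tθ') := hc'.symm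
        _ ≤ W2 (μ'.map Tθ) (ν₀.map Tθ) +
            (W2 (ν₀.map Tθ) (ν₀.map Tθ') + W2 (ν₀.map Tθ') (μ'.map Tθ')) :=
            le_trans (W2Aux.W2_triangle _ (ν₀.map Tθ) _)
              (add_le_add_right (W2Aux.W2_triangle _ (ν₀.map Tθ') _) _)
        _ ≤ (L' : ℝ≥0∞) * ε + (W2 (ν₀.map Tθ) (ν₀.map Tθ') + (L' : ℝ≥0∞) * ε) := by
            refine add_le_add ?_ (add_le_add_right hB _)
            rw [W2Aux.W2_symm]
            exact hA
        _ = W2 (ν₀.map Tθ) (ν₀.map Tθ') + 2 * (L' : ℝ≥0∞) * (ε : ℝ≥0∞) := by ring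
  have small : ∀ δ : ℝ≥0, 0 < δ → ∃ ε : ℝ≥0, 0 < ε ∧
      2 * (L' : ℝ≥0∞) * (ε : ℝ≥0∞) ≤ (δ : ℝ≥0∞) := by
    intro δ hδ
    refine ⟨δ / (2 * L' + 1), div_pos hδ (by positivity), ?_⟩
    have hne : (2 * L' + 1 : ℝ≥0) ≠ 0 := by positivity
    have hnn : (2 * L' * (δ / (2 * L' + 1)) : ℝ≥0) ≤ δ := by
      calc 2 * L' * (δ / (2 * L' + 1)) ≤ (2 * L' + 1) * (δ / (2 * L' + 1)) :=
            mul_le_mul_left (le_add_right le_rfl) _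
        _ = δ := by rw [mul_comm, div_mul_cancel₀ _ hne]
    calc 2 * (L' : ℝ≥0∞) * ((δ / (2 * L' + 1) : ℝ≥0) : ℝ≥0∞)
        = ((2 * L' * (δ / (2 * L' + 1)) : ℝ≥0) : ℝ≥0∞) := by push_cast; ring
      _ ≤ (δ : ℝ≥0∞) := by exact_mod_cast hnn
  refine le_antisymm ?_ ?_
  · refine ENNReal.le_of_forall_pos_le_add fun δ hδ _ => ?_
    obtain ⟨ε, hεpos, hεle⟩ := small δ hδ
    exact le_trans (main ε hεpos).1 (add_le_add_right hεle _)
  · refine ENNReal.le_of_forall_pos_le_add fun δ hδ _ => ?_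
    obtain ⟨ε, hεpos, hεle⟩ := small δ hδ
    exact le_trans (main ε hεpos).2 (add_le_add_right hεle _)
end
end

section
/- Let μ ∈ 𝕎₂(ℝ^m) and let T : ℝ^m → ℝ^m be Lipschitz. Then the second moments of the pushforwards of the Gaussian mollifications converge to the second moment of the pushforward: ∫_{ℝ^m} |x|² d(T♯(μ∗g_σ))(x) → ∫_{ℝ^m} |x|² d(T♯μ)(x) as σ → 0. -/
open MeasureTheory Filter Set
open scoped ENNReal NNReal

noncomputable section

/-- The multivariate Gaussian density `g_σ(x) = (2πσ²)^{−m/2} exp(−|x|²/(2σ²))` on `ℝ^m`. -/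
noncomputable def gauss (m : ℕ) (σ : ℝ) (x : EuclideanSpace ℝ (Fin m)) : ℝ :=
  (2 * Real.pi * σ ^ 2) ^ (-(m : ℝ) / 2) * Real.exp (-‖x‖ ^ 2 / (2 * σ ^ 2))

/-- The convolution `μ∗g_σ` of a measure `μ` with the Gaussian of density `g_σ`: the
absolutely continuous measure with density `x ↦ ∫ g_σ(x−y) dμ(y)`. -/
noncomputable def mollify {m : ℕ} (σ : ℝ) (μ : Measure (EuclideanSpace ℝ (Fin m))) :
    Measure (EuclideanSpace ℝ (Fin m)) :=
  volume.withDensity fun x => ENNReal.ofReal (∫ y, gauss m σ (x - y) ∂μ)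

namespace SecondMomentAux

variable {m : ℕ}

lemma gauss_nonneg (σ : ℝ) (x : EuclideanSpace ℝ (Fin m)) : 0 ≤ gauss m σ x := by
  unfold gauss
  positivity

lemma gauss_continuous (σ : ℝ) : Continuous (gauss m σ) := by
  unfold gauss
  exact continuous_const.mul (Real.continuous_exp.comp (by fun_prop))

lemma gauss_one_eq (w : EuclideanSpace ℝ (Fin m)) :
    gauss m 1 w = (2 * Real.pi) ^ (-(m : ℝ) / 2) * Real.exp (-(1/2 : ℝ) * ‖w‖ ^ 2) := by
  unfold gauss
  rw [show (2 * Real.pi * 1 ^ 2 : ℝ) = 2 * Real.pi by ring,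
    show -‖w‖ ^ 2 / (2 * 1 ^ 2) = -(1/2 : ℝ) * ‖w‖ ^ 2 by ring]

lemma integrable_rexp_neg_mul_sq_norm {b : ℝ} (hb : 0 < b) :
    Integrable (fun v : EuclideanSpace ℝ (Fin m) => Real.exp (-b * ‖v‖ ^ 2)) := by
  have h := (GaussianFourier.integrable_cexp_neg_mul_sq_norm_add
    (V := EuclideanSpace ℝ (Fin m)) (b := (b : ℂ)) (by simpa using hb) 0 0).norm
  simpa [Complex.norm_exp, ← Complex.ofReal_pow, ← Complex.ofReal_mul,
    ← Complex.ofReal_neg] using h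

lemma integrable_gauss_one : Integrable (gauss m 1) (volume : Measure (EuclideanSpace ℝ (Fin m))) := by
  have h : (gauss m 1 : EuclideanSpace ℝ (Fin m) → ℝ)
      = fun w => (2 * Real.pi) ^ (-(m : ℝ) / 2) * Real.exp (-(1/2 : ℝ) * ‖w‖ ^ 2) :=
    funext gauss_one_eq
  rw [h]
  exact (integrable_rexp_neg_mul_sq_norm (by norm_num)).const_mul _

lemma integral_gauss_one : ∫ w : EuclideanSpace ℝ (Fin m), gauss m 1 w = 1 := by
  simp_rw [gauss_one_eq]
  rw [integral_const_mul, GaussianFourier.integral_rexp_neg_mul_sq_norm (by norm_num : (0:ℝ) < 1/2),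
    finrank_euclideanSpace_fin, show Real.pi / (1/2 : ℝ) = 2 * Real.pi by ring,
    ← Real.rpow_add (by positivity), show (-(m:ℝ)/2 + (m:ℝ)/2) = 0 by ring, Real.rpow_zero]

lemma sq_mul_exp_le (t : ℝ) :
    t ^ 2 * Real.exp (-(1/2 : ℝ) * t ^ 2) ≤ 4 * Real.exp (-(1/4 : ℝ) * t ^ 2) := by
  have h1 : t ^ 2 ≤ 4 * Real.exp (t ^ 2 / 4) := by
    nlinarith [Real.add_one_le_exp (t ^ 2 / 4)]
  calc t ^ 2 * Real.exp (-(1/2 : ℝ) * t ^ 2)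
      ≤ (4 * Real.exp (t ^ 2 / 4)) * Real.exp (-(1/2 : ℝ) * t ^ 2) :=
        mul_le_mul_of_nonneg_right h1 (Real.exp_pos _).le
    _ = 4 * Real.exp (-(1/4 : ℝ) * t ^ 2) := by
        rw [mul_assoc, ← Real.exp_add, show t ^ 2 / 4 + -(1/2 : ℝ) * t ^ 2 = -(1/4 : ℝ) * t ^ 2 by ring]

lemma integrable_norm_sq_mul_gauss_one :
    Integrable (fun w : EuclideanSpace ℝ (Fin m) => ‖w‖ ^ 2 * gauss m 1 w) := by
  set c : ℝ := (2 * Real.pi) ^ (-(m : ℝ) / 2) with hc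
  have hc0 : 0 ≤ c := by positivity
  apply Integrable.mono' ((integrable_rexp_neg_mul_sq_norm (m := m)
    (by norm_num : (0:ℝ) < 1/4)).const_mul (c * 4))
  · exact ((continuous_norm.pow 2).mul (gauss_continuous 1)).aestronglyMeasurable
  · filter_upwards with w
    rw [Real.norm_eq_abs, abs_of_nonneg (mul_nonneg (by positivity) (gauss_nonneg 1 w)),
      gauss_one_eq]
    calc ‖w‖ ^ 2 * (c * Real.exp (-(1/2 : ℝ) * ‖w‖ ^ 2))
        = c * (‖w‖ ^ 2 * Real.exp (-(1/2 : ℝ) * ‖w‖ ^ 2)) := by ring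
      _ ≤ c * (4 * Real.exp (-(1/4 : ℝ) * ‖w‖ ^ 2)) :=
          mul_le_mul_of_nonneg_left (sq_mul_exp_le ‖w‖) hc0
      _ = c * 4 * Real.exp (-(1/4 : ℝ) * ‖w‖ ^ 2) := by ring

lemma integrable_norm_mul_gauss_one :
    Integrable (fun w : EuclideanSpace ℝ (Fin m) => ‖w‖ * gauss m 1 w) := by
  apply Integrable.mono' (integrable_gauss_one.add integrable_norm_sq_mul_gauss_one)
  · exact (continuous_norm.mul (gauss_continuous 1)).aestronglyMeasurable
  · filter_upwards with w
    have hg := gauss_nonneg (m := m) 1 w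
    rw [Real.norm_eq_abs, abs_of_nonneg (mul_nonneg (norm_nonneg w) hg)]
    simp only [Pi.add_apply]
    have h1 : (0:ℝ) ≤ 1 + ‖w‖ ^ 2 - ‖w‖ := by nlinarith [sq_nonneg (‖w‖ - 1), norm_nonneg w]
    nlinarith [mul_nonneg h1 hg]

lemma gauss_smul {σ : ℝ} (hσ : 0 < σ) (w : EuclideanSpace ℝ (Fin m)) :
    gauss m σ (σ • w) = (σ ^ m)⁻¹ * gauss m 1 w := by
  unfold gauss
  have hnorm : ‖σ • w‖ = σ * ‖w‖ := by
    rw [norm_smul, Real.norm_eq_abs, abs_of_pos hσ]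
  rw [hnorm]
  have h1 : (2 * Real.pi * σ ^ 2 : ℝ) ^ (-(m : ℝ) / 2)
      = (σ ^ m)⁻¹ * (2 * Real.pi * 1 ^ 2 : ℝ) ^ (-(m : ℝ) / 2) := by
    rw [show (2 * Real.pi * σ ^ 2 : ℝ) = (2 * Real.pi * 1 ^ 2) * σ ^ 2 by ring,
      Real.mul_rpow (by positivity) (by positivity)]
    have h2 : (σ ^ 2 : ℝ) ^ (-(m : ℝ) / 2) = (σ ^ m)⁻¹ := by
      rw [← Real.rpow_natCast σ 2, ← Real.rpow_mul hσ.le,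
        show ((2 : ℕ) : ℝ) * (-(m : ℝ) / 2) = -(m : ℝ) by push_cast; ring,
        Real.rpow_neg hσ.le, Real.rpow_natCast]
    rw [h2]; ring
  have h3 : -(σ * ‖w‖) ^ 2 / (2 * σ ^ 2) = -‖w‖ ^ 2 / (2 * 1 ^ 2) := by
    field_simp
  rw [h1, h3]; ring

lemma lintegral_smul_gauss {σ : ℝ} (hσ : 0 < σ) (f : EuclideanSpace ℝ (Fin m) → ℝ≥0∞)
    (hf : Measurable f) :
    ∫⁻ z, f z * ENNReal.ofReal (gauss m σ z)
      = ∫⁻ w, f (σ • w) * ENNReal.ofReal (gauss m 1 w) := by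
  have hg : Measurable fun z => f z * ENNReal.ofReal (gauss m σ z) :=
    hf.mul (gauss_continuous σ).measurable.ennreal_ofReal
  have hmap := Measure.map_addHaar_smul (volume : Measure (EuclideanSpace ℝ (Fin m)))
    (ne_of_gt hσ) (r := σ)
  have h1 : ∫⁻ w, f (σ • w) * ENNReal.ofReal (gauss m σ (σ • w))
      = ENNReal.ofReal ((σ ^ m)⁻¹) * ∫⁻ z, f z * ENNReal.ofReal (gauss m σ z) := by
    rw [← lintegral_map hg (measurable_const_smul σ), hmap, lintegral_smul_measure, smul_eq_mul,
      finrank_euclideanSpace_fin, abs_of_pos (by positivity)]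
  have h2 : ∀ w : EuclideanSpace ℝ (Fin m),
      f (σ • w) * ENNReal.ofReal (gauss m σ (σ • w))
        = ENNReal.ofReal ((σ ^ m)⁻¹) * (f (σ • w) * ENNReal.ofReal (gauss m 1 w)) := by
    intro w
    rw [gauss_smul hσ, ENNReal.ofReal_mul (by positivity)]
    ring
  rw [lintegral_congr h2, lintegral_const_mul' _ _ ENNReal.ofReal_ne_top] at h1
  have hne : ENNReal.ofReal ((σ ^ m)⁻¹) ≠ 0 := by
    simp [ENNReal.ofReal_eq_zero, not_le]
    positivity
  exact (ENNReal.mul_right_inj hne ENNReal.ofReal_ne_top).mp h1.symm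

lemma lintegral_gauss_total {σ : ℝ} (hσ : 0 < σ) :
    ∫⁻ z : EuclideanSpace ℝ (Fin m), ENNReal.ofReal (gauss m σ z) = 1 := by
  have h := lintegral_smul_gauss (m := m) hσ
    (fun _ : EuclideanSpace ℝ (Fin m) => (1 : ℝ≥0∞)) measurable_const
  simp only [one_mul] at h
  rw [h, ← ofReal_integral_eq_lintegral_ofReal integrable_gauss_one
    (Filter.Eventually.of_forall (gauss_nonneg 1)), integral_gauss_one, ENNReal.ofReal_one]

lemma lintegral_norm_gauss {σ : ℝ} (hσ : 0 < σ) :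
    ∫⁻ z : EuclideanSpace ℝ (Fin m), ENNReal.ofReal ‖z‖ * ENNReal.ofReal (gauss m σ z)
      = ENNReal.ofReal σ * ∫⁻ w, ENNReal.ofReal ‖w‖ * ENNReal.ofReal (gauss m 1 w) := by
  rw [lintegral_smul_gauss hσ (fun z => ENNReal.ofReal ‖z‖) measurable_norm.ennreal_ofReal]
  have h : ∀ w : EuclideanSpace ℝ (Fin m),
      ENNReal.ofReal ‖σ • w‖ * ENNReal.ofReal (gauss m 1 w)
        = ENNReal.ofReal σ * (ENNReal.ofReal ‖w‖ * ENNReal.ofReal (gauss m 1 w)) := by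
    intro w
    rw [norm_smul, Real.norm_eq_abs, abs_of_pos hσ, ENNReal.ofReal_mul hσ.le]
    ring
  rw [lintegral_congr h, lintegral_const_mul' _ _ ENNReal.ofReal_ne_top]

lemma lintegral_norm_sq_gauss {σ : ℝ} (hσ : 0 < σ) :
    ∫⁻ z : EuclideanSpace ℝ (Fin m), ENNReal.ofReal (‖z‖ ^ 2) * ENNReal.ofReal (gauss m σ z)
      = ENNReal.ofReal (σ ^ 2) * ∫⁻ w, ENNReal.ofReal (‖w‖ ^ 2) * ENNReal.ofReal (gauss m 1 w) := by
  rw [lintegral_smul_gauss hσ (fun z => ENNReal.ofReal (‖z‖ ^ 2))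
    (measurable_norm.pow_const 2).ennreal_ofReal]
  have h : ∀ w : EuclideanSpace ℝ (Fin m),
      ENNReal.ofReal (‖σ • w‖ ^ 2) * ENNReal.ofReal (gauss m 1 w)
        = ENNReal.ofReal (σ ^ 2) * (ENNReal.ofReal (‖w‖ ^ 2) * ENNReal.ofReal (gauss m 1 w)) := by
    intro w
    rw [norm_smul, Real.norm_eq_abs, abs_of_pos hσ, mul_pow, ENNReal.ofReal_mul (by positivity)]
    ring
  rw [lintegral_congr h, lintegral_const_mul' _ _ ENNReal.ofReal_ne_top]

lemma A1_lt_top :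
    ∫⁻ w : EuclideanSpace ℝ (Fin m), ENNReal.ofReal ‖w‖ * ENNReal.ofReal (gauss m 1 w) < ⊤ := by
  have h : ∀ w : EuclideanSpace ℝ (Fin m),
      ENNReal.ofReal ‖w‖ * ENNReal.ofReal (gauss m 1 w) = ENNReal.ofReal (‖w‖ * gauss m 1 w) := by
    intro w; rw [ENNReal.ofReal_mul (norm_nonneg _)]
  rw [lintegral_congr h]
  exact integrable_norm_mul_gauss_one.lintegral_lt_top

lemma B1_lt_top :
    ∫⁻ w : EuclideanSpace ℝ (Fin m), ENNReal.ofReal (‖w‖ ^ 2) * ENNReal.ofReal (gauss m 1 w) < ⊤ := by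
  have h : ∀ w : EuclideanSpace ℝ (Fin m),
      ENNReal.ofReal (‖w‖ ^ 2) * ENNReal.ofReal (gauss m 1 w)
        = ENNReal.ofReal (‖w‖ ^ 2 * gauss m 1 w) := by
    intro w; rw [ENNReal.ofReal_mul (by positivity)]
  rw [lintegral_congr h]
  exact integrable_norm_sq_mul_gauss_one.lintegral_lt_top

end SecondMomentAux

open SecondMomentAux

/-- For `μ ∈ 𝕎₂(ℝ^m)` and Lipschitz `T`, the second moments of the pushforwards
of the Gaussian mollifications converge to the second moment of the pushforward:
`∫ |x|² d(T♯(μ∗g_σ)) → ∫ |x|² d(T♯μ)` as `σ → 0⁺`. -/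
theorem second_moment_pushforward_mollify_tendsto {m : ℕ}
    (μ : Measure (EuclideanSpace ℝ (Fin m))) [IsProbabilityMeasure μ]
    (hmom : FiniteSecondMoment μ)
    (L : ℝ≥0) (T : EuclideanSpace ℝ (Fin m) → EuclideanSpace ℝ (Fin m))
    (hT : LipschitzWith L T) :
    Filter.Tendsto (fun σ : ℝ => ∫ x, ‖x‖ ^ 2 ∂((mollify σ μ).map T))
      (nhdsWithin 0 (Set.Ioi 0)) (nhds (∫ x, ‖x‖ ^ 2 ∂(μ.map T))) := by
  have hTm : Measurable T := hT.continuous.measurable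
  set K2 : ℝ≥0∞ := ∫⁻ y, ENNReal.ofReal (‖T y‖ ^ 2) ∂μ with hK2def
  set K1 : ℝ≥0∞ := ∫⁻ y, ENNReal.ofReal ‖T y‖ ∂μ with hK1def
  set A1 : ℝ≥0∞ := ∫⁻ w : EuclideanSpace ℝ (Fin m),
    ENNReal.ofReal ‖w‖ * ENNReal.ofReal (gauss m 1 w) ∂volume with hA1def
  set B1 : ℝ≥0∞ := ∫⁻ w : EuclideanSpace ℝ (Fin m),
    ENNReal.ofReal (‖w‖ ^ 2) * ENNReal.ofReal (gauss m 1 w) ∂volume with hB1def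
  have hA1top : A1 ≠ ⊤ := A1_lt_top.ne
  have hB1top : B1 ≠ ⊤ := B1_lt_top.ne
  -- finiteness of K2
  have hK2top : K2 ≠ ⊤ := by
    have hb : ∀ y : EuclideanSpace ℝ (Fin m),
        ENNReal.ofReal (‖T y‖ ^ 2)
          ≤ ENNReal.ofReal (2 * ‖T 0‖ ^ 2)
            + ENNReal.ofReal (2 * (L : ℝ) ^ 2) * ENNReal.ofReal (‖y‖ ^ 2) := by
      intro y
      have hly : ‖T y‖ ≤ ‖T 0‖ + (L : ℝ) * ‖y‖ := by
        have h := hT.dist_le_mul y 0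
        rw [dist_eq_norm, dist_eq_norm, sub_zero] at h
        have h2 : ‖T y‖ - ‖T 0‖ ≤ ‖T y - T 0‖ := norm_sub_norm_le _ _
        linarith
      have hsq : ‖T y‖ ^ 2 ≤ 2 * ‖T 0‖ ^ 2 + 2 * (L : ℝ) ^ 2 * ‖y‖ ^ 2 := by
        nlinarith [norm_nonneg (T y), norm_nonneg (T 0), norm_nonneg y, L.coe_nonneg,
          sq_nonneg (‖T 0‖ - (L : ℝ) * ‖y‖), mul_nonneg L.coe_nonneg (norm_nonneg y)]
      calc ENNReal.ofReal (‖T y‖ ^ 2)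
          ≤ ENNReal.ofReal (2 * ‖T 0‖ ^ 2 + 2 * (L : ℝ) ^ 2 * ‖y‖ ^ 2) :=
            ENNReal.ofReal_le_ofReal hsq
        _ = ENNReal.ofReal (2 * ‖T 0‖ ^ 2) + ENNReal.ofReal (2 * (L : ℝ) ^ 2 * ‖y‖ ^ 2) :=
            ENNReal.ofReal_add (by positivity) (by positivity)
        _ = _ := by rw [ENNReal.ofReal_mul (show (0:ℝ) ≤ 2 * (L : ℝ) ^ 2 by positivity)]
    have hle : K2 ≤ ENNReal.ofReal (2 * ‖T 0‖ ^ 2) * μ Set.univ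
        + ENNReal.ofReal (2 * (L : ℝ) ^ 2) * ∫⁻ y, ENNReal.ofReal (‖y‖ ^ 2) ∂μ := by
      calc K2 ≤ ∫⁻ y, (ENNReal.ofReal (2 * ‖T 0‖ ^ 2)
            + ENNReal.ofReal (2 * (L : ℝ) ^ 2) * ENNReal.ofReal (‖y‖ ^ 2)) ∂μ :=
          lintegral_mono hb
        _ = _ := by
          rw [lintegral_add_left measurable_const, lintegral_const,
            lintegral_const_mul' _ _ ENNReal.ofReal_ne_top]
    exact ne_top_of_le_ne_top (ENNReal.add_ne_top.mpr
      ⟨ENNReal.mul_ne_top ENNReal.ofReal_ne_top (measure_ne_top μ _),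
       ENNReal.mul_ne_top ENNReal.ofReal_ne_top hmom⟩) hle
  -- finiteness of K1
  have hK1top : K1 ≠ ⊤ := by
    have hb : ∀ y : EuclideanSpace ℝ (Fin m),
        ENNReal.ofReal ‖T y‖ ≤ 1 + ENNReal.ofReal (‖T y‖ ^ 2) := by
      intro y
      calc ENNReal.ofReal ‖T y‖ ≤ ENNReal.ofReal (1 + ‖T y‖ ^ 2) :=
            ENNReal.ofReal_le_ofReal (by nlinarith [sq_nonneg (‖T y‖ - 1)])
        _ = 1 + ENNReal.ofReal (‖T y‖ ^ 2) := by
            rw [ENNReal.ofReal_add (by norm_num) (by positivity), ENNReal.ofReal_one]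
    have hle : K1 ≤ 1 * μ Set.univ + K2 := by
      calc K1 ≤ ∫⁻ y, (1 + ENNReal.ofReal (‖T y‖ ^ 2)) ∂μ := lintegral_mono hb
        _ = _ := by rw [lintegral_add_left measurable_const, lintegral_const]
    exact ne_top_of_le_ne_top (ENNReal.add_ne_top.mpr
      ⟨ENNReal.mul_ne_top ENNReal.one_ne_top (measure_ne_top μ _), hK2top⟩) hle
  have hfm : Measurable fun x => ENNReal.ofReal (‖T x‖ ^ 2) :=
    (hTm.norm.pow_const 2).ennreal_ofReal
  -- the double-integral representation
  have hJ : ∀ σ : ℝ, 0 < σ →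
      (∫⁻ x, ENNReal.ofReal (‖T x‖ ^ 2) ∂(mollify σ μ))
        = ∫⁻ y, ∫⁻ z, ENNReal.ofReal (gauss m σ z)
            * ENNReal.ofReal (‖T (y + z)‖ ^ 2) ∂volume ∂μ := by
    intro σ hσ
    have hgc := gauss_continuous (m := m) σ
    have hρ : Measurable fun x : EuclideanSpace ℝ (Fin m) =>
        ENNReal.ofReal (∫ y, gauss m σ (x - y) ∂μ) := by
      have hsm : StronglyMeasurable fun p :
          EuclideanSpace ℝ (Fin m) × EuclideanSpace ℝ (Fin m) => gauss m σ (p.1 - p.2) :=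
        (hgc.comp (continuous_fst.sub continuous_snd)).stronglyMeasurable
      exact hsm.integral_prod_right'.measurable.ennreal_ofReal
    have hgi : ∀ x : EuclideanSpace ℝ (Fin m), Integrable (fun y => gauss m σ (x - y)) μ := by
      intro x
      apply Integrable.mono' (integrable_const ((2 * Real.pi * σ ^ 2) ^ (-(m : ℝ) / 2)))
      · exact (hgc.comp (continuous_const.sub continuous_id)).aestronglyMeasurable
      · filter_upwards with y
        rw [Real.norm_eq_abs, abs_of_nonneg (gauss_nonneg σ _)]
        unfold gauss
        have he : Real.exp (-‖x - y‖ ^ 2 / (2 * σ ^ 2)) ≤ 1 := by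
          rw [Real.exp_le_one_iff]
          apply div_nonpos_of_nonpos_of_nonneg (neg_nonpos.mpr (by positivity)) (by positivity)
        nlinarith [Real.rpow_nonneg
          (show (0:ℝ) ≤ 2 * Real.pi * σ ^ 2 by positivity) (-(m : ℝ) / 2)]
    have hpt : ∀ x : EuclideanSpace ℝ (Fin m),
        ((fun x => ENNReal.ofReal (∫ y, gauss m σ (x - y) ∂μ))
          * fun x => ENNReal.ofReal (‖T x‖ ^ 2)) x
          = ∫⁻ y, ENNReal.ofReal (gauss m σ (x - y)) * ENNReal.ofReal (‖T x‖ ^ 2) ∂μ := by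
      intro x
      simp only [Pi.mul_apply]
      rw [ofReal_integral_eq_lintegral_ofReal (hgi x)
        (Filter.Eventually.of_forall fun y => gauss_nonneg σ _),
        ← lintegral_mul_const' _ _ ENNReal.ofReal_ne_top]
    have hum : Measurable (Function.uncurry fun x y : EuclideanSpace ℝ (Fin m) =>
        ENNReal.ofReal (gauss m σ (x - y)) * ENNReal.ofReal (‖T x‖ ^ 2)) := by
      apply Measurable.fun_mul
      · exact (hgc.comp (continuous_fst.sub continuous_snd)).measurable.ennreal_ofReal
      · exact ((hTm.comp measurable_fst).norm.pow_const 2).ennreal_ofReal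
    simp only [mollify]
    rw [lintegral_withDensity_eq_lintegral_mul _ hρ hfm, lintegral_congr hpt,
      lintegral_lintegral_swap hum.aemeasurable]
    apply lintegral_congr
    intro y
    rw [← lintegral_add_left_eq_self
      (fun x => ENNReal.ofReal (gauss m σ (x - y)) * ENNReal.ofReal (‖T x‖ ^ 2)) y]
    apply lintegral_congr
    intro z
    simp only [add_sub_cancel_left, mul_comm]
  -- the error integral
  have hErr : ∀ σ : ℝ, 0 < σ → ∀ y : EuclideanSpace ℝ (Fin m),
      ∫⁻ z, ENNReal.ofReal (gauss m σ z)
          * ENNReal.ofReal (2 * (L : ℝ) * ‖T y‖ * ‖z‖ + 3 * (L : ℝ) ^ 2 * ‖z‖ ^ 2) ∂volume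
        = ENNReal.ofReal (2 * (L : ℝ)) * ENNReal.ofReal ‖T y‖ * (ENNReal.ofReal σ * A1)
          + ENNReal.ofReal (3 * (L : ℝ) ^ 2) * (ENNReal.ofReal (σ ^ 2) * B1) := by
    intro σ hσ y
    have h1 : ∀ z : EuclideanSpace ℝ (Fin m),
        ENNReal.ofReal (gauss m σ z)
            * ENNReal.ofReal (2 * (L : ℝ) * ‖T y‖ * ‖z‖ + 3 * (L : ℝ) ^ 2 * ‖z‖ ^ 2)
          = ENNReal.ofReal (2 * (L : ℝ)) * ENNReal.ofReal ‖T y‖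
              * (ENNReal.ofReal ‖z‖ * ENNReal.ofReal (gauss m σ z))
            + ENNReal.ofReal (3 * (L : ℝ) ^ 2)
              * (ENNReal.ofReal (‖z‖ ^ 2) * ENNReal.ofReal (gauss m σ z)) := by
      intro z
      rw [ENNReal.ofReal_add (by positivity) (by positivity),
        ENNReal.ofReal_mul (show (0:ℝ) ≤ 2 * (L : ℝ) * ‖T y‖ by positivity),
        ENNReal.ofReal_mul (show (0:ℝ) ≤ 2 * (L : ℝ) by positivity),
        ENNReal.ofReal_mul (show (0:ℝ) ≤ 3 * (L : ℝ) ^ 2 by positivity)]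
      ring
    rw [lintegral_congr h1,
      lintegral_add_left ((measurable_const.fun_mul
        (measurable_norm.ennreal_ofReal.fun_mul
          (gauss_continuous σ).measurable.ennreal_ofReal))),
      lintegral_const_mul' _ _ (ENNReal.mul_ne_top ENNReal.ofReal_ne_top ENNReal.ofReal_ne_top),
      lintegral_const_mul' _ _ ENNReal.ofReal_ne_top,
      lintegral_norm_gauss hσ, lintegral_norm_sq_gauss hσ]
  -- pointwise quadratic estimates
  have hreal : ∀ y z : EuclideanSpace ℝ (Fin m),
      ‖T (y + z)‖ ^ 2 ≤ ‖T y‖ ^ 2 + (2 * (L : ℝ) * ‖T y‖ * ‖z‖ + 3 * (L : ℝ) ^ 2 * ‖z‖ ^ 2)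
      ∧ ‖T y‖ ^ 2 ≤ ‖T (y + z)‖ ^ 2
          + (2 * (L : ℝ) * ‖T y‖ * ‖z‖ + 3 * (L : ℝ) ^ 2 * ‖z‖ ^ 2) := by
    intro y z
    have hd := hT.dist_le_mul (y + z) y
    rw [dist_eq_norm, dist_eq_norm, add_sub_cancel_left] at hd
    have h1 : ‖T (y + z)‖ ≤ ‖T y‖ + (L : ℝ) * ‖z‖ := by
      have := norm_sub_norm_le (T (y + z)) (T y); linarith
    have h2 : ‖T y‖ ≤ ‖T (y + z)‖ + (L : ℝ) * ‖z‖ := by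
      have := norm_sub_norm_le (T y) (T (y + z))
      rw [norm_sub_rev] at this; linarith
    have hc : (0:ℝ) ≤ (L : ℝ) * ‖z‖ := mul_nonneg L.coe_nonneg (norm_nonneg z)
    constructor
    · nlinarith [norm_nonneg (T (y + z)), norm_nonneg (T y), sq_nonneg ((L : ℝ) * ‖z‖)]
    · nlinarith [norm_nonneg (T (y + z)), norm_nonneg (T y), sq_nonneg ((L : ℝ) * ‖z‖),
        mul_nonneg hc (norm_nonneg (T y)), mul_nonneg hc (norm_nonneg (T (y + z)))]
  -- inner integral bounds
  have hIn1 : ∀ σ : ℝ, 0 < σ → ∀ y : EuclideanSpace ℝ (Fin m),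
      (∫⁻ z, ENNReal.ofReal (gauss m σ z) * ENNReal.ofReal (‖T (y + z)‖ ^ 2) ∂volume)
        ≤ ENNReal.ofReal (‖T y‖ ^ 2)
          + (ENNReal.ofReal (2 * (L : ℝ)) * ENNReal.ofReal ‖T y‖ * (ENNReal.ofReal σ * A1)
            + ENNReal.ofReal (3 * (L : ℝ) ^ 2) * (ENNReal.ofReal (σ ^ 2) * B1)) := by
    intro σ hσ y
    calc (∫⁻ z, ENNReal.ofReal (gauss m σ z) * ENNReal.ofReal (‖T (y + z)‖ ^ 2) ∂volume)
        ≤ ∫⁻ z, (ENNReal.ofReal (gauss m σ z) * ENNReal.ofReal (‖T y‖ ^ 2)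
            + ENNReal.ofReal (gauss m σ z)
              * ENNReal.ofReal (2 * (L : ℝ) * ‖T y‖ * ‖z‖ + 3 * (L : ℝ) ^ 2 * ‖z‖ ^ 2)) ∂volume := by
          apply lintegral_mono
          intro z
          dsimp only
          rw [← mul_add]
          exact mul_le_mul_right ((ENNReal.ofReal_le_ofReal (hreal y z).1).trans
            ENNReal.ofReal_add_le) _
      _ = _ := by
          rw [lintegral_add_left
              ((gauss_continuous σ).measurable.ennreal_ofReal.fun_mul measurable_const),
            lintegral_mul_const' _ _ ENNReal.ofReal_ne_top, lintegral_gauss_total hσ, one_mul,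
            hErr σ hσ y]
  have hIn2 : ∀ σ : ℝ, 0 < σ → ∀ y : EuclideanSpace ℝ (Fin m),
      ENNReal.ofReal (‖T y‖ ^ 2)
        ≤ (ENNReal.ofReal (2 * (L : ℝ)) * ENNReal.ofReal ‖T y‖ * (ENNReal.ofReal σ * A1)
            + ENNReal.ofReal (3 * (L : ℝ) ^ 2) * (ENNReal.ofReal (σ ^ 2) * B1))
          + ∫⁻ z, ENNReal.ofReal (gauss m σ z) * ENNReal.ofReal (‖T (y + z)‖ ^ 2) ∂volume := by
    intro σ hσ y
    have h0 : ENNReal.ofReal (‖T y‖ ^ 2)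
        = ∫⁻ z, ENNReal.ofReal (gauss m σ z) * ENNReal.ofReal (‖T y‖ ^ 2) ∂volume := by
      rw [lintegral_mul_const' _ _ ENNReal.ofReal_ne_top, lintegral_gauss_total hσ, one_mul]
    rw [h0]
    calc (∫⁻ z, ENNReal.ofReal (gauss m σ z) * ENNReal.ofReal (‖T y‖ ^ 2) ∂volume)
        ≤ ∫⁻ z, (ENNReal.ofReal (gauss m σ z)
              * ENNReal.ofReal (2 * (L : ℝ) * ‖T y‖ * ‖z‖ + 3 * (L : ℝ) ^ 2 * ‖z‖ ^ 2)
            + ENNReal.ofReal (gauss m σ z) * ENNReal.ofReal (‖T (y + z)‖ ^ 2)) ∂volume := by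
          apply lintegral_mono
          intro z
          dsimp only
          rw [← mul_add]
          refine mul_le_mul_right ((ENNReal.ofReal_le_ofReal (hreal y z).2).trans ?_) _
          exact (ENNReal.ofReal_add_le).trans (by rw [add_comm])
      _ = _ := by
          rw [lintegral_add_left ((gauss_continuous σ).measurable.ennreal_ofReal.fun_mul
              (((measurable_norm.const_mul _).fun_add
                ((measurable_norm.pow_const 2).const_mul _)).ennreal_ofReal)),
            hErr σ hσ y]
  -- integrating the error over y
  have hYint : ∀ σ : ℝ, 0 < σ →
      (∫⁻ y, (ENNReal.ofReal (2 * (L : ℝ)) * ENNReal.ofReal ‖T y‖ * (ENNReal.ofReal σ * A1)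
          + ENNReal.ofReal (3 * (L : ℝ) ^ 2) * (ENNReal.ofReal (σ ^ 2) * B1)) ∂μ)
        = ENNReal.ofReal (2 * (L : ℝ)) * K1 * (ENNReal.ofReal σ * A1)
          + ENNReal.ofReal (3 * (L : ℝ) ^ 2) * (ENNReal.ofReal (σ ^ 2) * B1) := by
    intro σ hσ
    have h1 : ∀ y : EuclideanSpace ℝ (Fin m),
        ENNReal.ofReal (2 * (L : ℝ)) * ENNReal.ofReal ‖T y‖ * (ENNReal.ofReal σ * A1)
          = (ENNReal.ofReal (2 * (L : ℝ)) * (ENNReal.ofReal σ * A1)) * ENNReal.ofReal ‖T y‖ :=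
      fun y => by ring
    rw [lintegral_add_left
        ((measurable_const.fun_mul hTm.norm.ennreal_ofReal).fun_mul measurable_const),
      lintegral_const, measure_univ, mul_one, lintegral_congr h1,
      lintegral_const_mul' _ _ (ENNReal.mul_ne_top ENNReal.ofReal_ne_top
        (ENNReal.mul_ne_top ENNReal.ofReal_ne_top hA1top))]
    congr 1
    ring
  -- key two-sided bounds
  have hEVtop : ∀ σ : ℝ,
      ENNReal.ofReal (2 * (L : ℝ)) * K1 * (ENNReal.ofReal σ * A1)
        + ENNReal.ofReal (3 * (L : ℝ) ^ 2) * (ENNReal.ofReal (σ ^ 2) * B1) ≠ ⊤ := by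
    intro σ
    exact ENNReal.add_ne_top.mpr
      ⟨ENNReal.mul_ne_top (ENNReal.mul_ne_top ENNReal.ofReal_ne_top hK1top)
        (ENNReal.mul_ne_top ENNReal.ofReal_ne_top hA1top),
       ENNReal.mul_ne_top ENNReal.ofReal_ne_top
        (ENNReal.mul_ne_top ENNReal.ofReal_ne_top hB1top)⟩
  have hJle : ∀ σ : ℝ, 0 < σ →
      (∫⁻ x, ENNReal.ofReal (‖T x‖ ^ 2) ∂(mollify σ μ))
        ≤ K2 + (ENNReal.ofReal (2 * (L : ℝ)) * K1 * (ENNReal.ofReal σ * A1)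
          + ENNReal.ofReal (3 * (L : ℝ) ^ 2) * (ENNReal.ofReal (σ ^ 2) * B1)) := by
    intro σ hσ
    calc (∫⁻ x, ENNReal.ofReal (‖T x‖ ^ 2) ∂(mollify σ μ))
        = ∫⁻ y, ∫⁻ z, ENNReal.ofReal (gauss m σ z)
            * ENNReal.ofReal (‖T (y + z)‖ ^ 2) ∂volume ∂μ := hJ σ hσ
      _ ≤ ∫⁻ y, (ENNReal.ofReal (‖T y‖ ^ 2)
          + (ENNReal.ofReal (2 * (L : ℝ)) * ENNReal.ofReal ‖T y‖ * (ENNReal.ofReal σ * A1)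
            + ENNReal.ofReal (3 * (L : ℝ) ^ 2) * (ENNReal.ofReal (σ ^ 2) * B1))) ∂μ :=
          lintegral_mono fun y => hIn1 σ hσ y
      _ = K2 + (ENNReal.ofReal (2 * (L : ℝ)) * K1 * (ENNReal.ofReal σ * A1)
          + ENNReal.ofReal (3 * (L : ℝ) ^ 2) * (ENNReal.ofReal (σ ^ 2) * B1)) := by
          rw [lintegral_add_left hfm, hYint σ hσ]
  have hJge : ∀ σ : ℝ, 0 < σ →
      K2 ≤ (∫⁻ x, ENNReal.ofReal (‖T x‖ ^ 2) ∂(mollify σ μ))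
        + (ENNReal.ofReal (2 * (L : ℝ)) * K1 * (ENNReal.ofReal σ * A1)
          + ENNReal.ofReal (3 * (L : ℝ) ^ 2) * (ENNReal.ofReal (σ ^ 2) * B1)) := by
    intro σ hσ
    calc K2 ≤ ∫⁻ y, ((ENNReal.ofReal (2 * (L : ℝ)) * ENNReal.ofReal ‖T y‖
            * (ENNReal.ofReal σ * A1)
          + ENNReal.ofReal (3 * (L : ℝ) ^ 2) * (ENNReal.ofReal (σ ^ 2) * B1))
          + ∫⁻ z, ENNReal.ofReal (gauss m σ z)
              * ENNReal.ofReal (‖T (y + z)‖ ^ 2) ∂volume) ∂μ :=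
          lintegral_mono fun y => hIn2 σ hσ y
      _ = _ := by
          rw [lintegral_add_left
            ((measurable_const.fun_mul hTm.norm.ennreal_ofReal).fun_mul measurable_const |>.fun_add
              measurable_const),
            hYint σ hσ, ← hJ σ hσ, add_comm]
  -- passing to real integrals
  have hpush : ∀ ν : Measure (EuclideanSpace ℝ (Fin m)),
      (∫ x, ‖x‖ ^ 2 ∂(ν.map T)) = (∫⁻ y, ENNReal.ofReal (‖T y‖ ^ 2) ∂ν).toReal := by
    intro ν
    rw [integral_eq_lintegral_of_nonneg_ae (f := fun x => ‖x‖ ^ 2) (Filter.Eventually.of_forall fun x => by positivity)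
      (continuous_norm.pow 2).aestronglyMeasurable,
      lintegral_map (measurable_norm.pow_const 2).ennreal_ofReal hTm]
  simp only [hpush]
  -- squeeze argument
  set c1r : ℝ := 2 * (L : ℝ) * K1.toReal * A1.toReal with hc1r
  set c2r : ℝ := 3 * (L : ℝ) ^ 2 * B1.toReal with hc2r
  have hbound : ∀ σ ∈ Set.Ioi (0:ℝ),
      |(∫⁻ y, ENNReal.ofReal (‖T y‖ ^ 2) ∂(mollify σ μ)).toReal - K2.toReal|
        ≤ c1r * σ + c2r * σ ^ 2 := by
    intro σ hσ
    have hσ' : (0:ℝ) < σ := hσ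
    have hJtop : (∫⁻ x, ENNReal.ofReal (‖T x‖ ^ 2) ∂(mollify σ μ)) ≠ ⊤ :=
      ne_top_of_le_ne_top (ENNReal.add_ne_top.mpr ⟨hK2top, hEVtop σ⟩) (hJle σ hσ')
    have hEVr : (ENNReal.ofReal (2 * (L : ℝ)) * K1 * (ENNReal.ofReal σ * A1)
        + ENNReal.ofReal (3 * (L : ℝ) ^ 2) * (ENNReal.ofReal (σ ^ 2) * B1)).toReal
          = c1r * σ + c2r * σ ^ 2 := by
      rw [ENNReal.toReal_add (ENNReal.mul_ne_top (ENNReal.mul_ne_top ENNReal.ofReal_ne_top hK1top)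
          (ENNReal.mul_ne_top ENNReal.ofReal_ne_top hA1top))
        (ENNReal.mul_ne_top ENNReal.ofReal_ne_top
          (ENNReal.mul_ne_top ENNReal.ofReal_ne_top hB1top))]
      simp only [ENNReal.toReal_mul]
      rw [ENNReal.toReal_ofReal (show (0:ℝ) ≤ 2 * (L : ℝ) by positivity),
        ENNReal.toReal_ofReal hσ'.le,
        ENNReal.toReal_ofReal (show (0:ℝ) ≤ 3 * (L : ℝ) ^ 2 by positivity),
        ENNReal.toReal_ofReal (show (0:ℝ) ≤ σ ^ 2 by positivity)]
      ring
    have h1 := ENNReal.toReal_mono (ENNReal.add_ne_top.mpr ⟨hK2top, hEVtop σ⟩) (hJle σ hσ')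
    rw [ENNReal.toReal_add hK2top (hEVtop σ), hEVr] at h1
    have h2 := ENNReal.toReal_mono (ENNReal.add_ne_top.mpr ⟨hJtop, hEVtop σ⟩) (hJge σ hσ')
    rw [ENNReal.toReal_add hJtop (hEVtop σ), hEVr] at h2
    rw [abs_le]
    constructor <;> linarith
  have htend : Filter.Tendsto (fun σ : ℝ => c1r * σ + c2r * σ ^ 2)
      (nhdsWithin 0 (Set.Ioi 0)) (nhds 0) := by
    have hcont : Continuous fun σ : ℝ => c1r * σ + c2r * σ ^ 2 := by fun_prop
    have h0 := hcont.tendsto 0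
    simp only [mul_zero, zero_pow, add_zero, ne_eq, OfNat.ofNat_ne_zero,
      not_false_eq_true] at h0
    exact tendsto_nhdsWithin_of_tendsto_nhds h0
  have habs : Filter.Tendsto
      (fun σ : ℝ => |(∫⁻ y, ENNReal.ofReal (‖T y‖ ^ 2) ∂(mollify σ μ)).toReal - K2.toReal|)
      (nhdsWithin 0 (Set.Ioi 0)) (nhds 0) :=
    squeeze_zero' (Filter.Eventually.of_forall fun _ => abs_nonneg _)
      (Filter.eventually_of_mem self_mem_nhdsWithin hbound) htend
  have hsub : Filter.Tendsto
      (fun σ : ℝ => (∫⁻ y, ENNReal.ofReal (‖T y‖ ^ 2) ∂(mollify σ μ)).toReal - K2.toReal)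
      (nhdsWithin 0 (Set.Ioi 0)) (nhds 0) := by
    rw [tendsto_zero_iff_norm_tendsto_zero]
    simpa [Real.norm_eq_abs] using habs
  have hfin := hsub.add_const K2.toReal
  simpa [hK2def] using hfin

end
end

section
/- Let D ∈ ℝ^{N×N} be a distance matrix (D = Dᵀ, D_{ii} = 0 for all i, D_{ij} ≥ 0 for all i ≠ j), let S ∈ ℝ^{N×N} be the entrywise square S_{ij} = D_{ij}², let H = I − (1/N)𝟙𝟙ᵀ be the centering matrix (𝟙 the all-ones vector), and let B = −(1/2) H S H. Then D is a Euclidean distance matrix — i.e., there exist points z₁,…,z_N ∈ ℝ^d for some d with D_{ij} = |zᵢ − zⱼ| for all i, j — if and only if B is symmetric positive semidefinite. -/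
open Matrix

noncomputable section

private lemma mds_quad {d N : ℕ} (z : Fin N → EuclideanSpace ℝ (Fin d)) (w : Fin N → ℝ)
    (hw : ∑ i, w i = 0) :
    ∑ i, ∑ j, w i * w j * ‖z i - z j‖^2 = -2 * ‖∑ i, w i • z i‖^2 := by
  have hexp : ∀ i j : Fin N, w i * w j * ‖z i - z j‖^2
      = w i * ‖z i‖^2 * w j - 2 * (w i * w j * inner ℝ (z i) (z j)) + w i * (w j * ‖z j‖^2) := by
    intro i j
    rw [norm_sub_sq_real]
    ring
  have hinner : (inner ℝ (∑ i, w i • z i) (∑ j, w j • z j) : ℝ)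
      = ∑ i, ∑ j, w i * w j * inner ℝ (z i) (z j) := by
    rw [sum_inner]
    refine Finset.sum_congr rfl fun i _ => ?_
    rw [inner_sum]
    refine Finset.sum_congr rfl fun j _ => ?_
    rw [real_inner_smul_left, real_inner_smul_right]
    ring
  calc ∑ i, ∑ j, w i * w j * ‖z i - z j‖^2
      = ∑ i, ∑ j, (w i * ‖z i‖^2 * w j - 2 * (w i * w j * inner ℝ (z i) (z j))
          + w i * (w j * ‖z j‖^2)) := by
        exact Finset.sum_congr rfl fun i _ => Finset.sum_congr rfl fun j _ => hexp i j
    _ = (∑ i, (w i * ‖z i‖^2) * ∑ j, w j)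
        - 2 * (∑ i, ∑ j, w i * w j * inner ℝ (z i) (z j))
        + (∑ i, w i) * (∑ j, w j * ‖z j‖^2) := by
        rw [Finset.sum_mul, Finset.mul_sum]
        rw [← Finset.sum_sub_distrib, ← Finset.sum_add_distrib]
        refine Finset.sum_congr rfl fun i _ => ?_
        rw [Finset.mul_sum, Finset.mul_sum, Finset.mul_sum]
        rw [← Finset.sum_sub_distrib, ← Finset.sum_add_distrib]
    _ = -2 * ‖∑ i, w i • z i‖^2 := by
        rw [hw, ← hinner, real_inner_self_eq_norm_sq]
        simp

private lemma mds_entry {N : ℕ} (S H : Matrix (Fin N) (Fin N) ℝ)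
    (hH : H = 1 - ((N : ℝ))⁻¹ • Matrix.of (fun _ _ => (1 : ℝ))) (i j : Fin N) :
    (H * S * H) i j = S i j - (N:ℝ)⁻¹ * (∑ k, S k j) - (N:ℝ)⁻¹ * (∑ l, S i l)
      + (N:ℝ)⁻¹ * (N:ℝ)⁻¹ * ∑ k, ∑ l, S k l := by
  have hHS : ∀ a b, (H * S) a b = S a b - (N:ℝ)⁻¹ * ∑ k, S k b := by
    intro a b
    simp [hH, Matrix.mul_apply, Matrix.sub_apply, Matrix.one_apply, sub_mul,
      Finset.sum_sub_distrib, Finset.sum_ite_eq, Finset.mul_sum]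
  rw [Matrix.mul_apply]
  simp only [hHS]
  simp [hH, Matrix.sub_apply, Matrix.one_apply, mul_sub, sub_mul,
    Finset.sum_sub_distrib, Finset.sum_ite_eq, Finset.mul_sum, Finset.sum_mul, mul_ite,
    mul_one, mul_zero]
  have hC : (∑ x : Fin N, S i x * (N:ℝ)⁻¹) = ∑ x : Fin N, (N:ℝ)⁻¹ * S i x :=
    Finset.sum_congr rfl fun _ _ => mul_comm _ _
  have hE : (∑ x : Fin N, ∑ k : Fin N, (N:ℝ)⁻¹ * S k x * (N:ℝ)⁻¹)
      = ∑ x : Fin N, ∑ k : Fin N, (N:ℝ)⁻¹ * (N:ℝ)⁻¹ * S x k := by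
    rw [Finset.sum_comm]
    exact Finset.sum_congr rfl fun _ _ => Finset.sum_congr rfl fun _ _ => by ring
  rw [hC, hE]
  ring

/-- (Classical MDS / Schoenberg.) Let `D` be an `N × N` distance matrix, let
`S` be its entrywise square, let `H = I − (1/N)𝟙𝟙ᵀ` be the centering matrix, and let
`B = −(1/2) H S H`. Then `D` is a Euclidean distance matrix — i.e., there exist points
`z₁,…,z_N ∈ ℝ^d` for some `d` with `D i j = |zᵢ − zⱼ|` — iff `B` is positive semidefinite. -/
theorem distance_matrix_euclidean_iff_posSemidef {N : ℕ}
    (D : Matrix (Fin N) (Fin N) ℝ)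
    (hsymm : D.IsSymm) (hdiag : ∀ i, D i i = 0)
    (hnonneg : ∀ i j, i ≠ j → 0 ≤ D i j)
    (S : Matrix (Fin N) (Fin N) ℝ) (hS : S = Matrix.of fun i j => (D i j) ^ 2)
    (H : Matrix (Fin N) (Fin N) ℝ)
    (hH : H = 1 - ((N : ℝ))⁻¹ • Matrix.of (fun _ _ => (1 : ℝ)))
    (B : Matrix (Fin N) (Fin N) ℝ) (hB : B = (-(1 / 2 : ℝ)) • (H * S * H)) :
    (∃ d : ℕ, ∃ z : Fin N → EuclideanSpace ℝ (Fin d), ∀ i j, D i j = ‖z i - z j‖) ↔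
      B.PosSemidef := by
  have hSd : ∀ i, S i i = 0 := by intro i; simp [hS, hdiag i]
  have hSs : ∀ i j, S i j = S j i := by
    intro i j
    simp only [hS, Matrix.of_apply]
    rw [hsymm.apply i j]
  have hcol : ∀ a, (∑ k, S k a) = ∑ k, S a k :=
    fun a => Finset.sum_congr rfl fun k _ => hSs k a
  have hBij : ∀ i j, B i j = -(1/2) * (S i j - (N:ℝ)⁻¹ * (∑ k, S k j)
      - (N:ℝ)⁻¹ * (∑ l, S i l) + (N:ℝ)⁻¹ * (N:ℝ)⁻¹ * ∑ k, ∑ l, S k l) := by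
    intro i j
    rw [hB, Matrix.smul_apply, mds_entry S H hH i j, smul_eq_mul]
  have hkey : ∀ i j, S i j = B i i + B j j - 2 * B i j := by
    intro i j
    rw [hBij i i, hBij j j, hBij i j, hcol i, hcol j, hSd i, hSd j]
    ring
  have hBsymm : ∀ i j, B i j = B j i := by
    intro i j
    rw [hBij i j, hBij j i, hcol i, hcol j, hSs i j]
    ring
  have hherm : B.IsHermitian := by
    ext i j
    rw [Matrix.conjTranspose_apply, star_trivial]
    exact hBsymm j i
  have hHsymm : ∀ i j, H i j = H j i := by
    intro i j
    by_cases h : i = j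
    · subst h; rfl
    · simp [hH, Matrix.sub_apply, Matrix.one_apply, h, Ne.symm h]
  constructor
  · rintro ⟨d, z, hz⟩
    refine Matrix.PosSemidef.of_dotProduct_mulVec_nonneg hherm fun v => ?_
    set w : Fin N → ℝ := H *ᵥ v with hwdef
    have hwapp : ∀ i, w i = v i - (N:ℝ)⁻¹ * ∑ k, v k := by
      intro i
      simp [hwdef, Matrix.mulVec, dotProduct, hH, Matrix.sub_apply, Matrix.one_apply,
        sub_mul, Finset.sum_sub_distrib, Finset.sum_ite_eq, Finset.mul_sum]
    have hwsum : ∑ i, w i = 0 := by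
      simp only [hwapp]
      rw [Finset.sum_sub_distrib, Finset.sum_const, Finset.card_univ, Fintype.card_fin]
      rcases Nat.eq_zero_or_pos N with h0 | h0
      · subst h0; simp
      · rw [nsmul_eq_mul, ← mul_assoc, mul_inv_cancel₀ (by positivity)]
        simp
    have hvH : v ᵥ* H = w := by
      ext j
      rw [hwdef, Matrix.vecMul, Matrix.mulVec]
      simp only [dotProduct]
      exact Finset.sum_congr rfl fun k _ => by rw [hHsymm j k]; ring
    have hq : star v ⬝ᵥ (B *ᵥ v) = -(1/2) * (w ⬝ᵥ (S *ᵥ w)) := by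
      rw [hB, star_trivial, Matrix.smul_mulVec, dotProduct_smul, smul_eq_mul,
        ← Matrix.mulVec_mulVec, ← Matrix.mulVec_mulVec, ← hwdef,
        Matrix.dotProduct_mulVec v H, hvH]
    have hSw : w ⬝ᵥ (S *ᵥ w) = ∑ i, ∑ j, w i * w j * ‖z i - z j‖^2 := by
      simp only [dotProduct, Matrix.mulVec, Finset.mul_sum]
      refine Finset.sum_congr rfl fun i _ => Finset.sum_congr rfl fun j _ => ?_
      rw [hS]
      simp only [Matrix.of_apply]
      rw [hz i j]
      ring
    rw [hq, hSw, mds_quad z w hwsum]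
    nlinarith [sq_nonneg ‖∑ i, w i • z i‖]
  · intro hpsd
    obtain ⟨X, hX⟩ : ∃ X : Matrix (Fin N) (Fin N) ℝ, B = Xᴴ * X := by
      open scoped MatrixOrder in exact CStarAlgebra.nonneg_iff_eq_star_mul_self.mp hpsd.nonneg
    set z : Fin N → EuclideanSpace ℝ (Fin N) :=
      fun i => (WithLp.equiv 2 (Fin N → ℝ)).symm (fun k => X k i) with hzdef
    refine ⟨N, z, fun i j => ?_⟩
    have hinner : ∀ a b, (inner ℝ (z a) (z b) : ℝ) = B a b := by
      intro a b
      rw [hX]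
      simp [hzdef, PiLp.inner_apply, RCLike.inner_apply, Matrix.mul_apply,
        Matrix.conjTranspose_apply]
      exact Finset.sum_congr rfl fun _ _ => mul_comm _ _
    have hsq : ‖z i - z j‖^2 = D i j ^ 2 := by
      rw [norm_sub_sq_real, ← real_inner_self_eq_norm_sq, ← real_inner_self_eq_norm_sq,
        hinner, hinner, hinner]
      have := hkey i j
      rw [hS] at this
      simp only [Matrix.of_apply] at this
      linarith
    have hDnn : 0 ≤ D i j := by
      rcases eq_or_ne i j with rfl | h
      · rw [hdiag i]
      · exact hnonneg i j h
    calc D i j = Real.sqrt (D i j ^ 2) := (Real.sqrt_sq hDnn).symm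
      _ = Real.sqrt (‖z i - z j‖^2) := by rw [hsq]
      _ = ‖z i - z j‖ := Real.sqrt_sq (norm_nonneg _)

end
end
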